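/- arXiv:2409.13914 — 6 statements merged into one kernel-verified Lean document; each statement's English description precedes it below -/
import Mathlib

section
/- Let $L\subsetneq\{1,\dots,n\}$ be a nonempty subset with complement $L^c$, let $e^2_p(L)$ denote the $p$-th elementary symmetric polynomial in the variables $y_i^2$ for $i\in L$, and let $h^2_p(L^c)$ denote the $p$-th complete homogeneous symmetric polynomial in the variables $y_i^2$ for $i\in L^c$. Let $I_n\subseteq\mathbb{C}[y_1,\dots,y_n]$ be the ideal generated by the symmetric polynomials without constant term in $y_1^2,\dots,y_n^2$. Then for every $1\leq p\leq |L|$, the difference $e^2_p(L)-(-1)^p h^2_p(L^c)$ belongs to $I_n$. -/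
open MvPolynomial

noncomputable section

namespace Stmt2Aux

open Finset

variable {ι R : Type*} [DecidableEq ι] [CommRing R]

def E (z : ι → R) (A : Finset ι) (p : ℕ) : R := ∑ S ∈ A.powersetCard p, ∏ i ∈ S, z i

def H (z : ι → R) (A : Finset ι) (p : ℕ) : R :=
  ∑ m ∈ A.sym p, ((m : Multiset ι).map z).prod

def P (z : ι → R) (A : Finset ι) : Polynomial R :=
  ∏ i ∈ A, (Polynomial.C (z i) * Polynomial.X + 1)

lemma coeff_P (z : ι → R) (A : Finset ι) (p : ℕ) : (P z A).coeff p = E z A p := by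
  rw [P, Finset.prod_add, Polynomial.finset_sum_coeff, E, powersetCard_eq_filter,
    Finset.sum_filter]
  refine Finset.sum_congr rfl fun t ht => ?_
  rw [Finset.prod_const_one, mul_one, Finset.prod_mul_distrib, Finset.prod_const]
  have : (∏ x ∈ t, Polynomial.C (z x)) = Polynomial.C (∏ x ∈ t, z x) := by
    rw [map_prod]
  rw [this, Polynomial.coeff_C_mul, Polynomial.coeff_X_pow]
  simp [eq_comm]

lemma E_zero (z : ι → R) (A : Finset ι) : E z A 0 = 1 := by simp [E]

lemma E_empty (z : ι → R) (k : ℕ) : E z (∅ : Finset ι) (k + 1) = 0 := by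
  rw [E, Finset.powersetCard_eq_empty.mpr (by simp), Finset.sum_empty]

lemma E_insert {a : ι} {A : Finset ι} (ha : a ∉ A) (z : ι → R) (k : ℕ) :
    E z (insert a A) (k + 1) = E z A (k + 1) + z a * E z A k := by
  rw [← coeff_P, P, Finset.prod_insert ha, ← P, add_mul, one_mul, Polynomial.coeff_add,
    mul_assoc, Polynomial.coeff_C_mul, Polynomial.coeff_X_mul, coeff_P, coeff_P]
  ring

lemma E_union {A B : Finset ι} (hd : Disjoint A B) (z : ι → R) (p : ℕ) :
    E z (A ∪ B) p = ∑ k ∈ range (p + 1), E z A k * E z B (p - k) := by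
  rw [← coeff_P, P, Finset.prod_union hd, ← P, ← P, Polynomial.coeff_mul,
    Finset.Nat.sum_antidiagonal_eq_sum_range_succ_mk]
  exact Finset.sum_congr rfl fun k _ => by rw [coeff_P, coeff_P]

lemma H_zero (z : ι → R) (A : Finset ι) : H z A 0 = 1 := by
  rw [H, Finset.sym_zero, Finset.sum_singleton]
  simp [show ((∅ : Sym ι 0) : Multiset ι) = 0 from rfl]

lemma H_empty (z : ι → R) (p : ℕ) : H z (∅ : Finset ι) (p + 1) = 0 := by
  simp [H]

lemma H_insert {a : ι} {B : Finset ι} (ha : a ∉ B) (z : ι → R) (p : ℕ) :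
    H z (insert a B) (p + 1) = H z B (p + 1) + z a * H z (insert a B) p := by
  have hdecomp : (insert a B).sym (p + 1)
      = B.sym (p + 1) ∪ ((insert a B).sym p).image (Sym.cons a) := by
    ext m
    simp only [mem_union, mem_image, mem_sym_iff, mem_insert]
    constructor
    · intro hm
      by_cases ham : a ∈ m
      · right
        refine ⟨m.erase a ham, fun x hx => ?_, Sym.cons_erase ham⟩
        have hxm : x ∈ m := by
          rw [← Sym.mem_coe, Sym.coe_erase] at hx
          exact Sym.mem_coe.mp (Multiset.mem_of_mem_erase hx)
        exact hm x hxm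
      · left
        intro x hx
        rcases hm x hx with rfl | h
        · exact absurd hx ham
        · exact h
    · rintro (h | ⟨s, hs, rfl⟩)
      · exact fun x hx => Or.inr (h x hx)
      · intro x hx
        rcases Sym.mem_cons.mp hx with rfl | hx
        · exact Or.inl rfl
        · exact hs x hx
  have hdisj : Disjoint (B.sym (p + 1)) (((insert a B).sym p).image (Sym.cons a)) := by
    rw [Finset.disjoint_right]
    rintro m hm hmB
    simp only [mem_image] at hm
    obtain ⟨s, -, rfl⟩ := hm
    exact ha ((Finset.mem_sym_iff.mp hmB) a (Sym.mem_cons_self a s))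
  rw [H, hdecomp, Finset.sum_union hdisj,
    Finset.sum_image (fun x _ y _ h => (Sym.cons_inj_right a x y).mp h)]
  rw [H, H, Finset.mul_sum]
  congr 1
  refine Finset.sum_congr rfl fun s _ => ?_
  rw [Sym.coe_cons, Multiset.map_cons, Multiset.prod_cons]

lemma eh (z : ι → R) (B : Finset ι) (p : ℕ) :
    ∑ k ∈ range (p + 2), (-1 : R) ^ k * E z B k * H z B (p + 1 - k) = 0 := by
  induction B using Finset.induction_on with
  | empty =>
    refine Finset.sum_eq_zero fun k hk => ?_
    match k with
    | 0 => simp [E_zero, H_empty]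
    | (k + 1) => simp [E_empty]
  | @insert a B ha ih =>
    have hS1 : ∑ k ∈ range (p + 2), (-1 : R) ^ k * E z B k * H z (insert a B) (p + 1 - k)
        = z a * ∑ k ∈ range (p + 1), (-1 : R) ^ k * E z B k * H z (insert a B) (p - k) := by
      rw [Finset.sum_range_succ]
      have hterm : ∀ k ∈ range (p + 1),
          (-1 : R) ^ k * E z B k * H z (insert a B) (p + 1 - k)
          = (-1 : R) ^ k * E z B k * H z B (p + 1 - k)
            + z a * ((-1 : R) ^ k * E z B k * H z (insert a B) (p - k)) := by
        intro k hk
        have hk' : p + 1 - k = (p - k) + 1 := by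
          have := Finset.mem_range.mp hk; omega
        rw [hk', H_insert ha]
        ring
      rw [Finset.sum_congr rfl hterm, Finset.sum_add_distrib, ← Finset.mul_sum]
      have hlast : (-1 : R) ^ (p + 1) * E z B (p + 1) * H z (insert a B) (p + 1 - (p + 1))
          = (-1 : R) ^ (p + 1) * E z B (p + 1) * H z B (p + 1 - (p + 1)) := by
        simp [H_zero]
      rw [hlast, add_right_comm, ← Finset.sum_range_succ
        (fun k => (-1 : R) ^ k * E z B k * H z B (p + 1 - k)), ih, zero_add]
    calc
      ∑ k ∈ range (p + 2), (-1 : R) ^ k * E z (insert a B) k * H z (insert a B) (p + 1 - k)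
          = (∑ k ∈ range (p + 2), (-1 : R) ^ k * E z B k * H z (insert a B) (p + 1 - k))
            - z a * ∑ k ∈ range (p + 1),
                (-1 : R) ^ k * E z B k * H z (insert a B) (p - k) := by
        rw [Finset.sum_range_succ' (fun k => (-1 : R) ^ k * E z (insert a B) k
            * H z (insert a B) (p + 1 - k)),
          Finset.sum_range_succ' (fun k => (-1 : R) ^ k * E z B k
            * H z (insert a B) (p + 1 - k))]
        have hterm : ∀ i ∈ range (p + 1),
            (-1 : R) ^ (i + 1) * E z (insert a B) (i + 1) * H z (insert a B) (p + 1 - (i + 1))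
            = (-1 : R) ^ (i + 1) * E z B (i + 1) * H z (insert a B) (p + 1 - (i + 1))
              + (-(z a)) * ((-1 : R) ^ i * E z B i * H z (insert a B) (p - i)) := by
          intro i hi
          rw [Nat.succ_sub_succ, E_insert ha]
          ring
        rw [Finset.sum_congr rfl hterm, Finset.sum_add_distrib, ← Finset.mul_sum]
        have h0 : ((-1 : R) ^ 0 * E z (insert a B) 0 * H z (insert a B) (p + 1 - 0))
            = ((-1 : R) ^ 0 * E z B 0 * H z (insert a B) (p + 1 - 0)) := by
          rw [E_zero, E_zero]
        rw [h0]
        ring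
      _ = 0 := by rw [hS1]; ring

lemma he (z : ι → R) (B : Finset ι) (m : ℕ) :
    ∑ k ∈ range (m + 1), (-1 : R) ^ k * H z B k * E z B (m - k)
      = if m = 0 then 1 else 0 := by
  match m with
  | 0 => simp [H_zero, E_zero]
  | (q + 1) =>
    rw [if_neg (Nat.succ_ne_zero q)]
    have hrefl := Finset.sum_range_reflect
      (fun k => (-1 : R) ^ k * H z B k * E z B (q + 1 - k)) (q + 2)
    have hterm : ∀ j ∈ range (q + 2),
        (-1 : R) ^ (q + 2 - 1 - j) * H z B (q + 2 - 1 - j) * E z B (q + 1 - (q + 2 - 1 - j))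
        = (-1 : R) ^ (q + 1) * ((-1 : R) ^ j * E z B j * H z B (q + 1 - j)) := by
      intro j hj
      have hj' : j ≤ q + 1 := by have := Finset.mem_range.mp hj; omega
      have h1 : q + 2 - 1 - j = q + 1 - j := by omega
      have h2 : q + 1 - (q + 1 - j) = j := by omega
      have hsign : (-1 : R) ^ (q + 1 - j) = (-1 : R) ^ (q + 1) * (-1 : R) ^ j := by
        have hpow : (-1 : R) ^ (q + 1 - j) * (-1 : R) ^ j = (-1 : R) ^ (q + 1) := by
          rw [← pow_add]
          congr 1
          omega
        have hsq : (-1 : R) ^ j * (-1 : R) ^ j = 1 := by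
          rw [← pow_add]
          exact Even.neg_one_pow ⟨j, rfl⟩
        calc (-1 : R) ^ (q + 1 - j) = (-1 : R) ^ (q + 1 - j) * ((-1 : R) ^ j * (-1 : R) ^ j) := by
              rw [hsq, mul_one]
          _ = ((-1 : R) ^ (q + 1 - j) * (-1 : R) ^ j) * (-1 : R) ^ j := by ring
          _ = (-1 : R) ^ (q + 1) * (-1 : R) ^ j := by rw [hpow]
      rw [h1, h2, hsign]
      ring
    rw [Finset.sum_congr rfl hterm, ← Finset.mul_sum, eh, mul_zero] at hrefl
    exact hrefl.symm

lemma tri {M : Type*} [AddCommMonoid M] (f : ℕ → ℕ → M) (p : ℕ) :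
    ∑ k ∈ range (p + 1), ∑ a ∈ range (p + 1 - k), f k a
      = ∑ a ∈ range (p + 1), ∑ k ∈ range (p + 1 - a), f k a := by
  have key : ∀ g : ℕ → ℕ → M, ∀ k ∈ range (p + 1),
      ∑ a ∈ range (p + 1 - k), g k a
        = ∑ a ∈ range (p + 1), if a + k ≤ p then g k a else 0 := by
    intro g k hk
    rw [Finset.sum_ite, Finset.sum_const_zero, add_zero]
    apply Finset.sum_congr _ fun _ _ => rfl
    ext a
    simp only [Finset.mem_filter, Finset.mem_range]
    omega
  rw [Finset.sum_congr rfl (key f), Finset.sum_comm]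
  refine Finset.sum_congr rfl fun a ha => ?_
  rw [key (fun a k => f k a) a ha]
  refine Finset.sum_congr rfl fun k hk => ?_
  simp only [Nat.add_comm k a]

lemma main_id {ι : Type*} [Fintype ι] [DecidableEq ι] (z : ι → R) (L : Finset ι) (p : ℕ) :
    E z L p = ∑ k ∈ range (p + 1), (-1 : R) ^ k * H z Lᶜ k * E z Finset.univ (p - k) := by
  have huniv : (Finset.univ : Finset ι) = L ∪ Lᶜ := (Finset.union_compl L).symm
  have step1 : ∀ k ∈ range (p + 1),
      (-1 : R) ^ k * H z Lᶜ k * E z Finset.univ (p - k)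
        = ∑ a ∈ range (p + 1 - k),
            (-1 : R) ^ k * H z Lᶜ k * (E z L a * E z Lᶜ (p - k - a)) := by
    intro k hk
    have hk' : p - k + 1 = p + 1 - k := by have := Finset.mem_range.mp hk; omega
    rw [huniv, E_union disjoint_compl_right, ← hk', Finset.mul_sum]
  rw [Finset.sum_congr rfl step1,
    tri (fun k a => (-1 : R) ^ k * H z Lᶜ k * (E z L a * E z Lᶜ (p - k - a)))]
  have step2 : ∀ a ∈ range (p + 1),
      ∑ k ∈ range (p + 1 - a), (-1 : R) ^ k * H z Lᶜ k * (E z L a * E z Lᶜ (p - k - a))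
        = E z L a * if p - a = 0 then 1 else 0 := by
    intro a ha
    have ha' : a ≤ p := by have := Finset.mem_range.mp ha; omega
    have hpa : p + 1 - a = (p - a) + 1 := by omega
    rw [hpa, ← he z Lᶜ (p - a), Finset.mul_sum]
    refine Finset.sum_congr rfl fun k hk => ?_
    have hsub : p - k - a = p - a - k := by omega
    rw [hsub]
    ring
  rw [Finset.sum_congr rfl step2]
  rw [Finset.sum_eq_single_of_mem p (Finset.self_mem_range_succ p)]
  · simp
  · intro b hb hbp
    have : ¬ (p - b = 0) := by
      have := Finset.mem_range.mp hb; omega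
    rw [if_neg this, mul_zero]

end Stmt2Aux

open Stmt2Aux

/-- for a nonempty proper subset `L ⊆ {1,…,n}` and `1 ≤ p ≤ |L|`, the difference
`e²_p(L) - (-1)^p h²_p(Lᶜ)` lies in the ideal generated by the symmetric polynomials
(without constant term) in `y₁²,…,y_n²`. -/
theorem stmt2 (n : ℕ) (L : Finset (Fin n)) (hL : L.Nonempty) (hLne : L ≠ Finset.univ)
    (In : Ideal (MvPolynomial (Fin n) ℂ))
    (hIn : In = Ideal.span { q | ∃ p : ℕ, 1 ≤ p ∧ p ≤ n ∧
        q = ∑ S ∈ Finset.powersetCard p (Finset.univ : Finset (Fin n)),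
              ∏ i ∈ S, X i ^ 2 })
    (p : ℕ) (hp1 : 1 ≤ p) (hp2 : p ≤ L.card) :
    (∑ S ∈ Finset.powersetCard p L, ∏ i ∈ S, X i ^ 2)
      - (-1 : MvPolynomial (Fin n) ℂ) ^ p *
          (∑ m ∈ (Lᶜ).sym p,
            ((m : Multiset (Fin n)).map (fun i => (X i : MvPolynomial (Fin n) ℂ) ^ 2)).prod)
      ∈ In := by
  set z : Fin n → MvPolynomial (Fin n) ℂ := fun i => (X i : MvPolynomial (Fin n) ℂ) ^ 2 with hz
  have hgoal : (∑ S ∈ Finset.powersetCard p L, ∏ i ∈ S, X i ^ 2)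
      - (-1 : MvPolynomial (Fin n) ℂ) ^ p *
          (∑ m ∈ (Lᶜ).sym p,
            ((m : Multiset (Fin n)).map (fun i => (X i : MvPolynomial (Fin n) ℂ) ^ 2)).prod)
      = ∑ k ∈ Finset.range p, (-1 : MvPolynomial (Fin n) ℂ) ^ k * H z Lᶜ k
          * E z Finset.univ (p - k) := by
    have h1 : (∑ S ∈ Finset.powersetCard p L, ∏ i ∈ S, X i ^ 2) = E z L p := rfl
    have h2 : (∑ m ∈ (Lᶜ).sym p,
        ((m : Multiset (Fin n)).map (fun i => (X i : MvPolynomial (Fin n) ℂ) ^ 2)).prod)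
        = H z Lᶜ p := rfl
    rw [h1, h2, main_id z L p, Finset.sum_range_succ, Nat.sub_self, E_zero]
    ring
  rw [hgoal]
  refine Ideal.sum_mem In fun k hk => ?_
  refine Ideal.mul_mem_left In _ ?_
  rw [hIn]
  refine Ideal.subset_span ?_
  refine ⟨p - k, ?_, ?_, rfl⟩
  · have := Finset.mem_range.mp hk; omega
  · have hcard : L.card ≤ n := by
      simpa using Finset.card_le_card (Finset.subset_univ L)
    omega
end
end

section
/- Let $k\geq 1$ and consider the polynomial ring $\mathbb{C}[y_1,\dots,y_{2k}]$. Let $I_{(2k,2k)}$ be the ideal generated by: (i) $y_i^2$ for $1\leq i\leq 2k$, and (ii) $y_L - y_{\bar L}$ for every subset $L\subseteq\{1,\dots,2k\}$ with $|L|=k$ and complement $\bar L$, where $y_L=\prod_{i\in L}y_i$. Then $\dim_\mathbb{C}\mathbb{C}[y_1,\dots,y_{2k}]/I_{(2k,2k)} = 2^{2k-1}$, and indeed equals $\sum_{l=0}^{k-1}\binom{2k}{l}+\frac{1}{2}\binom{2k}{k}$. -/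
open MvPolynomial Finset

noncomputable section

namespace Stmt13Aux

variable {n : ℕ}

def ind (S : Finset (Fin n)) : Fin n →₀ ℕ := ∑ i ∈ S, Finsupp.single i 1

lemma ind_apply (S : Finset (Fin n)) (j : Fin n) : ind S j = if j ∈ S then 1 else 0 := by
  classical
  simp [ind, Finset.sum_apply', Finsupp.single_apply]

lemma ind_injective : Function.Injective (ind (n := n)) := by
  intro S T h
  ext j
  have := DFunLike.congr_fun h j
  rw [ind_apply, ind_apply] at this
  by_cases hS : j ∈ S <;> by_cases hT : j ∈ T <;> simp [hS, hT] at this ⊢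

lemma mem_support_ind (S : Finset (Fin n)) (j : Fin n) : j ∈ (ind S).support ↔ j ∈ S := by
  rw [Finsupp.mem_support_iff, ind_apply]
  split_ifs with h <;> simp [h]

lemma ind_le_ind_iff (L T : Finset (Fin n)) : ind L ≤ ind T ↔ L ⊆ T := by
  rw [Finsupp.le_def]
  constructor
  · intro h j hj
    have := h j
    rw [ind_apply, ind_apply, if_pos hj] at this
    by_contra hc
    rw [if_neg hc] at this
    omega
  · intro h j
    rw [ind_apply, ind_apply]
    by_cases hj : j ∈ L
    · rw [if_pos hj, if_pos (h hj)]
    · simp [hj]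

lemma ind_sub_single (T : Finset (Fin n)) {i : Fin n} (hi : i ∈ T) :
    ind T - Finsupp.single i 1 = ind (T.erase i) := by
  ext j
  rw [Finsupp.tsub_apply, ind_apply, ind_apply, Finsupp.single_apply]
  by_cases hij : i = j
  · subst hij; simp [hi]
  · simp [Finset.mem_erase, hij, Ne.symm hij]

lemma prod_X_eq (L : Finset (Fin n)) :
    (∏ i ∈ L, X i : MvPolynomial (Fin n) ℂ) = monomial (ind L) 1 := by
  classical
  induction L using Finset.induction with
  | empty => simp [ind]
  | @insert a s ha ih =>
      have h : ind (insert a s) = Finsupp.single a 1 + ind s := by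
        rw [ind, ind, Finset.sum_insert ha]
      rw [Finset.prod_insert ha, ih, h,
        show (X a : MvPolynomial (Fin n) ℂ) = monomial (Finsupp.single a 1) 1 from rfl,
        monomial_mul, one_mul]

lemma coeff_ind_mul_sq (T : Finset (Fin n)) (r : MvPolynomial (Fin n) ℂ) (i : Fin n) :
    coeff (ind T) (r * X i ^ 2) = 0 := by
  classical
  rw [pow_two, ← mul_assoc, coeff_mul_X']
  split_ifs with h
  · rw [mem_support_ind] at h
    rw [ind_sub_single T h, coeff_mul_X', if_neg]
    rw [mem_support_ind]
    simp
  · rfl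

lemma coeff_ind_mul_prod (T L : Finset (Fin n)) (hc : T.card ≤ L.card)
    (r : MvPolynomial (Fin n) ℂ) :
    coeff (ind T) (r * ∏ i ∈ L, X i) = if T = L then coeff 0 r else 0 := by
  classical
  rw [prod_X_eq, coeff_mul_monomial']
  by_cases h : L ⊆ T
  · have hLT : L = T := Finset.eq_of_subset_of_card_le h hc
    subst hLT
    rw [if_pos le_rfl, if_pos rfl, tsub_self, mul_one]
  · rw [if_neg (fun hle => h ((ind_le_ind_iff L T).1 hle)), if_neg]
    rintro rfl
    exact h subset_rfl

lemma nat_id (k : ℕ) (hk : 1 ≤ k) :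
    2 ^ (2 * k) = 2 * (∑ l ∈ Finset.range k, (2 * k).choose l) + (2 * k).choose k := by
  have h0 := Nat.sum_range_choose (2 * k)
  have hsplit : ∑ i ∈ Finset.range (2 * k + 1), (2 * k).choose i
      = (∑ i ∈ Finset.range k, (2 * k).choose i)
        + ∑ i ∈ Finset.Ico k (2 * k + 1), (2 * k).choose i := by
    rw [Finset.range_eq_Ico, Finset.range_eq_Ico]
    exact (Finset.sum_Ico_consecutive (fun i => (2 * k).choose i) (Nat.zero_le k) (by omega : k ≤ 2 * k + 1)).symm
  have hbot : ∑ i ∈ Finset.Ico k (2 * k + 1), (2 * k).choose i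
      = (2 * k).choose k + ∑ i ∈ Finset.Ico (k + 1) (2 * k + 1), (2 * k).choose i :=
    Finset.sum_eq_sum_Ico_succ_bot (by omega) _
  have htail : ∑ i ∈ Finset.Ico (k + 1) (2 * k + 1), (2 * k).choose i
      = ∑ i ∈ Finset.range k, (2 * k).choose (k + 1 + i) := by
    rw [Finset.sum_Ico_eq_sum_range]
    have h1 : 2 * k + 1 - (k + 1) = k := by omega
    rw [h1]
  have hrefl : ∑ i ∈ Finset.range k, (2 * k).choose (k + 1 + i)
      = ∑ i ∈ Finset.range k, (2 * k).choose i := by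
    have h1 : ∀ i ∈ Finset.range k, (2 * k).choose (k + 1 + i) = (2 * k).choose (k - 1 - i) := by
      intro i hi
      rw [Finset.mem_range] at hi
      rw [← Nat.choose_symm (by omega : k + 1 + i ≤ 2 * k)]
      congr 1
      omega
    rw [Finset.sum_congr rfl h1]
    exact Finset.sum_range_reflect (fun i => (2 * k).choose i) k
  omega

end Stmt13Aux

end

open Stmt13Aux in
/-- the quotient of `ℂ[y₁,…,y_{2k}]` by the ideal `I_{(2k,2k)}` generated by
`y_i²` and `y_L - y_{L̄}` for `|L| = k` has dimension `2^{2k-1} = ∑_{l<k} C(2k,l) + C(2k,k)/2`. -/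
theorem stmt13 (k : ℕ) (hk : 1 ≤ k)
    (I : Ideal (MvPolynomial (Fin (2 * k)) ℂ))
    (hI : I = Ideal.span ({ q | ∃ i : Fin (2 * k), q = X i ^ 2 } ∪
      { q | ∃ L : Finset (Fin (2 * k)), L.card = k ∧
          q = (∏ i ∈ L, X i) - ∏ i ∈ Lᶜ, X i })) :
    Module.finrank ℂ (MvPolynomial (Fin (2 * k)) ℂ ⧸ I) = 2 ^ (2 * k - 1) ∧
      2 * Module.finrank ℂ (MvPolynomial (Fin (2 * k)) ℂ ⧸ I)
        = 2 * (∑ l ∈ Finset.range k, (2 * k).choose l) + (2 * k).choose k := by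
  classical
  have hn0 : 0 < 2 * k := by omega
  set e0 : Fin (2 * k) := ⟨0, hn0⟩ with he0
  set P : Finset (Fin (2 * k)) → Prop :=
    fun S => S.card < k ∨ (S.card = k ∧ e0 ∈ S) with hP
  set π : MvPolynomial (Fin (2 * k)) ℂ →ₐ[ℂ] (MvPolynomial (Fin (2 * k)) ℂ ⧸ I) :=
    Ideal.Quotient.mkₐ ℂ I with hπ
  have hsq_mem : ∀ i : Fin (2 * k), (X i ^ 2 : MvPolynomial (Fin (2 * k)) ℂ) ∈ I := by
    intro i; rw [hI]; exact Ideal.subset_span (Or.inl ⟨i, rfl⟩)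
  have hgen_mem : ∀ L : Finset (Fin (2 * k)), L.card = k →
      ((∏ i ∈ L, X i) - ∏ i ∈ Lᶜ, X i : MvPolynomial (Fin (2 * k)) ℂ) ∈ I := by
    intro L hL; rw [hI]; exact Ideal.subset_span (Or.inr ⟨L, hL, rfl⟩)
  have hπzero : ∀ p : MvPolynomial (Fin (2 * k)) ℂ, p ∈ I → π p = 0 := by
    intro p hp
    rw [hπ, Ideal.Quotient.mkₐ_eq_mk, Ideal.Quotient.eq_zero_iff_mem]
    exact hp
  have hπL : ∀ L : Finset (Fin (2 * k)), L.card = k →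
      π (∏ i ∈ L, X i) = π (∏ i ∈ Lᶜ, X i) := by
    intro L hL
    rw [← sub_eq_zero, ← map_sub]
    exact hπzero _ (hgen_mem L hL)
  have hcard_compl : ∀ S : Finset (Fin (2 * k)), Sᶜ.card = 2 * k - S.card := by
    intro S; rw [Finset.card_compl, Fintype.card_fin]
  have hcard_le : ∀ S : Finset (Fin (2 * k)), S.card ≤ 2 * k := by
    intro S; simpa using Finset.card_le_univ S
  -- ψ vanishes on I
  have key : ∀ p ∈ I, ∀ T : Finset (Fin (2 * k)), T.card ≤ k →
      coeff (ind T) p + (if T.card = k then coeff (ind Tᶜ) p else 0) = 0 := by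
    intro p hp
    rw [hI] at hp
    have main : ∀ T : Finset (Fin (2 * k)), T.card ≤ k →
        ∀ r : MvPolynomial (Fin (2 * k)) ℂ,
        coeff (ind T) (r * p) + (if T.card = k then coeff (ind Tᶜ) (r * p) else 0) = 0 := by
      induction hp using Submodule.span_induction with
      | mem g hg =>
          intro T hT r
          rcases hg with ⟨i, rfl⟩ | ⟨L, hL, rfl⟩
          · rw [coeff_ind_mul_sq, coeff_ind_mul_sq]
            simp
          · have hLc : Lᶜ.card = k := by rw [hcard_compl]; omega
            by_cases hTk : T.card = k
            · have hTc : Tᶜ.card = k := by rw [hcard_compl]; omega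
              rw [if_pos hTk, mul_sub, coeff_sub, coeff_sub,
                coeff_ind_mul_prod T L (by omega), coeff_ind_mul_prod T Lᶜ (by omega),
                coeff_ind_mul_prod Tᶜ L (by omega), coeff_ind_mul_prod Tᶜ Lᶜ (by omega)]
              have e1 : (Tᶜ = L) = (T = Lᶜ) := propext
                ⟨fun h => by rw [← h, compl_compl], fun h => by rw [h, compl_compl]⟩
              have e2 : (Tᶜ = Lᶜ) = (T = L) := propext
                ⟨fun h => by rw [← compl_compl T, h, compl_compl], fun h => by rw [h]⟩
              simp only [e1, e2]
              split_ifs <;> ring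
            · rw [if_neg hTk, mul_sub, coeff_sub,
                coeff_ind_mul_prod T L (by omega), coeff_ind_mul_prod T Lᶜ (by omega),
                if_neg (fun h : T = L => hTk (by rw [h, hL])),
                if_neg (fun h : T = Lᶜ => hTk (by rw [h, hLc]))]
              simp
      | zero => intro T hT r; simp
      | add x y hx hy ihx ihy =>
          intro T hT r
          have h1 := ihx T hT r
          have h2 := ihy T hT r
          rw [mul_add, coeff_add, coeff_add] at *
          split_ifs at * <;> linear_combination h1 + h2
      | smul a x hx ih =>
          intro T hT r
          have h := ih T hT (r * a)
          rwa [mul_assoc] at h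
    intro T hT
    have h := main T hT 1
    rwa [one_mul] at h
  -- linear independence
  have hli : LinearIndependent ℂ
      (fun S : {S : Finset (Fin (2 * k)) // P S} => π (∏ i ∈ S.1, X i)) := by
    rw [Fintype.linearIndependent_iff]
    intro g hg S₀
    set p : MvPolynomial (Fin (2 * k)) ℂ :=
      ∑ S : {S : Finset (Fin (2 * k)) // P S}, g S • ∏ i ∈ S.1, X i with hpdef
    have hπp : π p = 0 := by
      rw [hpdef, map_sum]
      simp only [map_smul]
      exact hg
    have hpI : p ∈ I := by
      rw [hπ, Ideal.Quotient.mkₐ_eq_mk, Ideal.Quotient.eq_zero_iff_mem] at hπp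
      exact hπp
    have hS₀ : S₀.1.card < k ∨ (S₀.1.card = k ∧ e0 ∈ S₀.1) := by
      have := S₀.2; simpa [hP] using this
    have hS₀k : S₀.1.card ≤ k := by rcases hS₀ with h | h <;> omega
    have hkey := key p hpI S₀.1 hS₀k
    have hc : ∀ T : Finset (Fin (2 * k)),
        coeff (ind T) p = ∑ S : {S : Finset (Fin (2 * k)) // P S},
          g S * (if S.1 = T then 1 else 0) := by
      intro T
      rw [hpdef, coeff_sum]
      refine Finset.sum_congr rfl fun S _ => ?_
      rw [coeff_smul, prod_X_eq, coeff_monomial, smul_eq_mul]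
      congr 1
      simp [ind_injective.eq_iff]
    have h1 : coeff (ind S₀.1) p = g S₀ := by
      rw [hc]
      simp only [mul_ite, mul_one, mul_zero, ← Subtype.ext_iff]
      simp [Finset.sum_ite_eq']
    have h2 : (if S₀.1.card = k then coeff (ind S₀.1ᶜ) p else 0) = 0 := by
      split_ifs with hk0
      · rw [hc]
        apply Finset.sum_eq_zero
        intro S _
        rw [if_neg, mul_zero]
        intro hEq
        have h0S : e0 ∈ S₀.1 := by
          rcases hS₀ with h | h
          · omega
          · exact h.2
        have hS : S.1.card < k ∨ (S.1.card = k ∧ e0 ∈ S.1) := by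
          have := S.2; simpa [hP] using this
        rcases hS with h | h
        · have : S.1.card = k := by
            rw [hEq, hcard_compl]; omega
          omega
        · have : e0 ∈ S₀.1ᶜ := hEq ▸ h.2
          exact (Finset.mem_compl.1 this) h0S
      · rfl
    rw [h1, h2] at hkey
    simpa using hkey
  -- spanning
  set W : Submodule ℂ (MvPolynomial (Fin (2 * k)) ℂ ⧸ I) :=
    Submodule.span ℂ (Set.range
      fun S : {S : Finset (Fin (2 * k)) // P S} => π (∏ i ∈ S.1, X i)) with hW
  have hmono : ∀ m : Fin (2 * k) →₀ ℕ, π (monomial m 1) ∈ W := by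
    intro m
    by_cases hsf : ∀ i, m i ≤ 1
    · have hm : m = ind m.support := by
        ext j
        rw [ind_apply]
        rcases Nat.lt_or_ge (m j) 1 with h | h
        · have h0 : m j = 0 := by omega
          rw [h0, if_neg]
          simp [Finsupp.mem_support_iff, h0]
        · have h1 : m j = 1 := le_antisymm (hsf j) h
          rw [h1, if_pos]
          rw [Finsupp.mem_support_iff]
          omega
      rw [hm, ← prod_X_eq]
      set S : Finset (Fin (2 * k)) := m.support with hSdef
      rcases lt_trichotomy S.card k with h | h | h
      · exact Submodule.subset_span ⟨⟨S, Or.inl h⟩, rfl⟩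
      · by_cases h0 : e0 ∈ S
        · exact Submodule.subset_span ⟨⟨S, Or.inr ⟨h, h0⟩⟩, rfl⟩
        · rw [hπL S h]
          refine Submodule.subset_span ⟨⟨Sᶜ, Or.inr ⟨?_, ?_⟩⟩, rfl⟩
          · rw [hcard_compl]; omega
          · rwa [Finset.mem_compl]
      · obtain ⟨L, hLS, hLcard⟩ := Finset.exists_subset_card_eq (s := S) (n := k) (le_of_lt h)
        have hSL : (S \ L).Nonempty := by
          rw [← Finset.card_pos, Finset.card_sdiff_of_subset hLS]
          omega
        obtain ⟨i, hi⟩ := hSL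
        have hiL : i ∉ L := (Finset.mem_sdiff.1 hi).2
        have hiLc : i ∈ Lᶜ := Finset.mem_compl.2 hiL
        have hprod : (∏ j ∈ S, X j : MvPolynomial (Fin (2 * k)) ℂ)
            = (∏ j ∈ L, X j) * ∏ j ∈ S \ L, X j := by
          rw [← Finset.prod_sdiff hLS]
          exact mul_comm _ _
        have hzero : π ((∏ j ∈ Lᶜ, X j) * ∏ j ∈ S \ L, X j) = 0 := by
          apply hπzero
          rw [← Finset.mul_prod_erase _ _ hiLc, ← Finset.mul_prod_erase _ _ hi]
          have hr : (X i * ∏ j ∈ Lᶜ.erase i, X j) * (X i * ∏ j ∈ (S \ L).erase i, X j)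
              = ((∏ j ∈ Lᶜ.erase i, X j) * ∏ j ∈ (S \ L).erase i, X j)
                * (X i ^ 2 : MvPolynomial (Fin (2 * k)) ℂ) := by
            ring
          rw [hr]
          exact Ideal.mul_mem_left I _ (hsq_mem i)
        rw [hprod, map_mul, hπL L hLcard, ← map_mul, hzero]
        exact Submodule.zero_mem W
    · push_neg at hsf
      obtain ⟨i, hi⟩ := hsf
      have hsplit : (monomial m (1 : ℂ))
          = monomial (m - Finsupp.single i 2) 1 * X i ^ 2 := by
        have hmm : m = (m - Finsupp.single i 2) + Finsupp.single i 2 := by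
          ext j
          rw [Finsupp.add_apply, Finsupp.tsub_apply, Finsupp.single_apply]
          by_cases hij : i = j
          · subst hij; simp; omega
          · simp [hij]
        rw [X_pow_eq_monomial, monomial_mul, mul_one, ← hmm]
      rw [hsplit, map_mul, hπzero _ (hsq_mem i), mul_zero]
      exact Submodule.zero_mem W
  have hspan : ⊤ ≤ W := by
    rintro q -
    obtain ⟨p, rfl⟩ := Ideal.Quotient.mkₐ_surjective ℂ I q
    show π p ∈ W
    have hps : π p = ∑ m ∈ p.support, π (monomial m (coeff m p)) := by
      conv_lhs => rw [p.as_sum]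
      rw [map_sum]
    rw [hps]
    apply Submodule.sum_mem
    intro m hm
    have hs : monomial m (coeff m p) = coeff m p • monomial m (1 : ℂ) := by
      rw [smul_monomial, smul_eq_mul, mul_one]
    rw [hs, map_smul]
    exact Submodule.smul_mem _ _ (hmono m)
  -- the basis and rank
  have hrank : Module.finrank ℂ (MvPolynomial (Fin (2 * k)) ℂ ⧸ I)
      = Fintype.card {S : Finset (Fin (2 * k)) // P S} :=
    Module.finrank_eq_card_basis (Module.Basis.mk hli hspan)
  -- counting
  have hPc : ∀ S : Finset (Fin (2 * k)), P Sᶜ ↔ ¬ P S := by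
    intro S
    have h1 := hcard_compl S
    have h2 := hcard_le S
    simp only [hP, Finset.mem_compl]
    constructor
    · rintro (h | ⟨hcc, h0c⟩) (h' | ⟨h', h0'⟩) <;> try omega
      exact h0c h0'
    · intro hn
      push_neg at hn
      rcases Nat.lt_or_ge k S.card with h | h
      · left; omega
      · have hc : S.card = k := by omega
        right
        exact ⟨by omega, hn.2 hc⟩
  have hfilters : (Finset.univ.filter P).card
      = (Finset.univ.filter fun S => ¬ P S).card := by
    apply Finset.card_nbij (fun S => Sᶜ)
    · intro S hS
      simp only [Finset.coe_filter, Finset.mem_filter, Finset.mem_univ, true_and, Set.mem_setOf_eq] at hS ⊢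
      rw [← compl_compl S] at hS
      exact (hPc Sᶜ).1 hS
    · intro S _ T _ h
      exact compl_injective h
    · intro T hT
      simp only [Finset.coe_filter, Finset.mem_univ, true_and, Set.mem_setOf_eq] at hT
      refine ⟨Tᶜ, ?_, compl_compl T⟩
      simp only [Finset.coe_filter, Finset.mem_univ, true_and, Set.mem_setOf_eq]
      exact (hPc T).2 hT
  have htot := Finset.card_filter_add_card_filter_not
    (s := (Finset.univ : Finset (Finset (Fin (2 * k))))) (p := P)
  have hcardU : (Finset.univ : Finset (Finset (Fin (2 * k)))).card = 2 ^ (2 * k) := by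
    rw [Finset.card_univ, Fintype.card_finset, Fintype.card_fin]
  have hsub : Fintype.card {S : Finset (Fin (2 * k)) // P S}
      = (Finset.univ.filter P).card := Fintype.card_subtype P
  have h2N : 2 * Module.finrank ℂ (MvPolynomial (Fin (2 * k)) ℂ ⧸ I) = 2 ^ (2 * k) := by
    rw [hrank]
    omega
  have hpow : 2 ^ (2 * k) = 2 * 2 ^ (2 * k - 1) := by
    rw [← pow_succ']
    congr 1
    omega
  have hnat := nat_id k hk
  constructor
  · omega
  · omega
end

section
/- Consider the surjective ring homomorphism $p:\mathbb{C}[y_1,\dots,y_{2k}]/(y_i^2,\ y_K:|K|=k+1)\twoheadrightarrow\mathbb{C}[y_1,\dots,y_{2k}]/I_{(2k,2k)}$, where $I_{(2k,2k)}$ is generated by $y_i^2$ and $y_L-y_{\bar L}$ for $|L|=k$ (with $\bar L$ the complement of $L$), and $(y_K:|K|=k+1)$ denotes the squarefree monomials of degree $k+1$. Then the kernel of $p$ is the linear span of the elements $y_L-y_{\bar L}$ for $|L|=k$, which has dimension $\frac{1}{2}\binom{2k}{k}$, and is an irreducible representation of the Weyl group $W_D^{2k}$ of type $D_{2k}$ acting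 by signed permutations with an even number of sign changes. -/
open MvPolynomial

noncomputable section

/-- The algebra endomorphism of `ℂ[y₁,…,y_n]` given by the signed permutation
`y_i ↦ ε_i · y_{σ(i)}`. -/
def signedMap {n : ℕ} (σ : Equiv.Perm (Fin n)) (ε : Fin n → ℂ) :
    MvPolynomial (Fin n) ℂ →ₐ[ℂ] MvPolynomial (Fin n) ℂ :=
  MvPolynomial.aeval (fun i => C (ε i) * X (σ i))

namespace Stmt15Aux

variable {n : ℕ}

/-- exponent vector of the squarefree monomial with support `T` -/
def dI (T : Finset (Fin n)) : Fin n →₀ ℕ := ∑ i ∈ T, Finsupp.single i 1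

lemma dI_apply (T : Finset (Fin n)) (j : Fin n) : dI T j = if j ∈ T then 1 else 0 := by
  classical
  simp only [dI, Finsupp.finset_sum_apply, Finsupp.single_apply]
  rw [Finset.sum_ite_eq' T j (fun _ => 1)]

lemma dI_le_one (T : Finset (Fin n)) (j : Fin n) : dI T j ≤ 1 := by
  rw [dI_apply]; split <;> simp

lemma dI_support (T : Finset (Fin n)) : (dI T).support = T := by
  ext j; simp [Finsupp.mem_support_iff, dI_apply]

lemma dI_inj {T T' : Finset (Fin n)} (h : dI T = dI T') : T = T' := by
  rw [← dI_support T, ← dI_support T', h]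

lemma prod_X_eq (T : Finset (Fin n)) :
    (∏ i ∈ T, (X i : MvPolynomial (Fin n) ℂ)) = monomial (dI T) 1 := by
  classical
  induction T using Finset.induction_on with
  | empty => simp [dI]
  | insert a s h ih =>
    rw [Finset.prod_insert h, ih]
    show X a * _ = _
    rw [X, monomial_mul, one_mul]
    congr 1
    simp only [dI, Finset.sum_insert h]

lemma coeff_prod_X (T L : Finset (Fin n)) :
    coeff (dI T) (∏ i ∈ L, (X i : MvPolynomial (Fin n) ℂ)) = if L = T then 1 else 0 := by
  rw [prod_X_eq, coeff_monomial]
  by_cases h : L = T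
  · simp [h]
  · rw [if_neg, if_neg h]; exact fun hc => h (dI_inj hc)

end Stmt15Aux

namespace Stmt15Aux

variable {n k : ℕ}

lemma dI_insert {a : Fin n} {s : Finset (Fin n)} (h : a ∉ s) :
    dI (insert a s) = Finsupp.single a 1 + dI s := by
  simp only [dI, Finset.sum_insert h]

/-- the generating set of `I1` -/
def gens1 (n k : ℕ) : Set (MvPolynomial (Fin n) ℂ) :=
  { q | ∃ i : Fin n, q = X i ^ 2 } ∪
    { q | ∃ K : Finset (Fin n), K.card = k + 1 ∧ q = ∏ i ∈ K, X i }

lemma gens1_eq : gens1 n k = (fun s => monomial s (1 : ℂ)) ''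
    ({d | ∃ i : Fin n, d = Finsupp.single i 2} ∪
      {d | ∃ K : Finset (Fin n), K.card = k + 1 ∧ d = dI K}) := by
  ext q
  constructor
  · rintro (⟨i, rfl⟩ | ⟨K, hK, rfl⟩)
    · exact ⟨Finsupp.single i 2, Or.inl ⟨i, rfl⟩, (X_pow_eq_monomial).symm⟩
    · exact ⟨dI K, Or.inr ⟨K, hK, rfl⟩, (prod_X_eq K).symm⟩
  · rintro ⟨d, (⟨i, rfl⟩ | ⟨K, hK, rfl⟩), rfl⟩
    · exact Or.inl ⟨i, X_pow_eq_monomial.symm⟩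
    · exact Or.inr ⟨K, hK, (prod_X_eq K).symm⟩

lemma mem_I1_iff {p : MvPolynomial (Fin n) ℂ} :
    p ∈ Ideal.span (gens1 n k) ↔ ∀ m ∈ p.support,
      (∃ i : Fin n, Finsupp.single i 2 ≤ m) ∨
        ∃ K : Finset (Fin n), K.card = k + 1 ∧ dI K ≤ m := by
  rw [gens1_eq, mem_ideal_span_monomial_image]
  constructor
  · intro h m hm
    obtain ⟨si, (⟨i, rfl⟩ | ⟨K, hK, rfl⟩), hle⟩ := h m hm
    · exact Or.inl ⟨i, hle⟩
    · exact Or.inr ⟨K, hK, hle⟩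
  · intro h m hm
    rcases h m hm with ⟨i, hle⟩ | ⟨K, hK, hle⟩
    · exact ⟨_, Or.inl ⟨i, rfl⟩, hle⟩
    · exact ⟨_, Or.inr ⟨K, hK, rfl⟩, hle⟩

lemma coeff_dI_eq_zero {T : Finset (Fin n)} (hT : T.card ≤ k)
    {p : MvPolynomial (Fin n) ℂ} (hp : p ∈ Ideal.span (gens1 n k)) :
    coeff (dI T) p = 0 := by
  by_contra hc
  have hmem : dI T ∈ p.support := mem_support_iff.mpr hc
  rcases mem_I1_iff.mp hp _ hmem with ⟨i, hle⟩ | ⟨K, hK, hle⟩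
  · have := hle i
    simp only [Finsupp.single_apply, if_pos rfl] at this
    exact absurd (this.trans (dI_le_one T i)) (by norm_num)
  · have hKT : K ⊆ T := by
      intro j hj
      have := hle j
      rw [dI_apply, if_pos hj, dI_apply] at this
      by_contra hjT
      rw [if_neg hjT] at this
      omega
    have := Finset.card_le_card hKT
    omega

lemma X_mul_prod_mem {T : Finset (Fin n)} (hT : T.card = k) (i : Fin n) :
    X i * (∏ j ∈ T, X j) ∈ Ideal.span (gens1 n k) := by
  classical
  have hXi : (X i : MvPolynomial (Fin n) ℂ) = monomial (Finsupp.single i 1) 1 := by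
    rw [X]
  rw [hXi, prod_X_eq, monomial_mul, one_mul]
  rw [mem_I1_iff]
  intro m hm
  have hm' : m = Finsupp.single i 1 + dI T := by
    have : ((monomial (Finsupp.single i 1 + dI T)) (1 : ℂ)).support = {Finsupp.single i 1 + dI T} := by
      rw [support_monomial, if_neg one_ne_zero]
    rw [this, Finset.mem_singleton] at hm
    exact hm
  subst hm'
  by_cases hi : i ∈ T
  · left
    refine ⟨i, fun j => ?_⟩
    rcases eq_or_ne j i with rfl | hj
    · simp [Finsupp.add_apply, dI_apply, hi]
    · simp [Finsupp.add_apply, Finsupp.single_eq_of_ne' (Ne.symm hj)]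
  · right
    exact ⟨insert i T, by rw [Finset.card_insert_of_notMem hi, hT],
      le_of_eq (dI_insert hi)⟩

lemma monomial_mul_prod_sub_mem {T : Finset (Fin n)} (hT : T.card = k)
    (hT' : Tᶜ.card = k) {d : Fin n →₀ ℕ} (hd : d ≠ 0) (c : ℂ) :
    monomial d c * ((∏ j ∈ T, X j) - ∏ j ∈ Tᶜ, X j) ∈ Ideal.span (gens1 n k) := by
  obtain ⟨i, hi⟩ := Finsupp.support_nonempty_iff.mpr hd
  have hi1 : 1 ≤ d i := Nat.one_le_iff_ne_zero.mpr (Finsupp.mem_support_iff.mp hi)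
  have harg : d - Finsupp.single i 1 + Finsupp.single i 1 = d := by
    ext j
    rcases eq_or_ne j i with rfl | hj
    · simp only [Finsupp.add_apply, Finsupp.tsub_apply, Finsupp.single_eq_same]
      omega
    · simp [Finsupp.add_apply, Finsupp.tsub_apply, Finsupp.single_eq_of_ne' (Ne.symm hj)]
  have hd' : monomial d c = monomial (d - Finsupp.single i 1) c * X i := by
    rw [X, monomial_mul, mul_one, harg]
  rw [hd', mul_assoc]
  apply Ideal.mul_mem_left
  rw [mul_sub]
  exact sub_mem (X_mul_prod_mem hT i) (X_mul_prod_mem hT' i)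

lemma mul_prod_sub_mem {T : Finset (Fin n)} (hT : T.card = k) (hT' : Tᶜ.card = k)
    (p : MvPolynomial (Fin n) ℂ) :
    p * ((∏ j ∈ T, X j) - ∏ j ∈ Tᶜ, X j) -
      C (coeff 0 p) * ((∏ j ∈ T, X j) - ∏ j ∈ Tᶜ, X j) ∈ Ideal.span (gens1 n k) := by
  rw [← sub_mul]
  have key : ∀ q : MvPolynomial (Fin n) ℂ, coeff 0 q = 0 →
      q * ((∏ j ∈ T, X j) - ∏ j ∈ Tᶜ, X j) ∈ Ideal.span (gens1 n k) := by
    intro q hq0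
    rw [q.as_sum, Finset.sum_mul]
    refine Submodule.sum_mem _ fun d hd => ?_
    refine monomial_mul_prod_sub_mem hT hT' ?_ _
    rintro rfl
    exact (Finsupp.mem_support_iff.mp hd) hq0
  exact key _ (by simp [coeff_C])

end Stmt15Aux

namespace Stmt15Aux

variable {k : ℕ}

/-- abbreviation for the two-product difference -/
def pL {n : ℕ} (L : Finset (Fin n)) : MvPolynomial (Fin n) ℂ :=
  (∏ i ∈ L, X i) - ∏ i ∈ Lᶜ, X i

lemma pL_compl {n : ℕ} (L : Finset (Fin n)) : pL Lᶜ = - pL L := by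
  simp [pL, compl_compl]

lemma card_compl_eq {L : Finset (Fin (2 * k))} (hL : L.card = k) : Lᶜ.card = k := by
  rw [Finset.card_compl, hL]
  simp only [Fintype.card_fin]
  omega

section Quot

variable (k)

/-- the distinguished index `0`. -/
def i0 (hk : 1 ≤ k) : Fin (2 * k) := ⟨0, by omega⟩

/-- the index type for the basis of `S`. -/
def ι (hk : 1 ≤ k) : Type := {L : Finset (Fin (2 * k)) // L.card = k ∧ i0 k hk ∈ L}

instance (hk : 1 ≤ k) : Fintype (ι k hk) := by unfold ι; infer_instance

instance (hk : 1 ≤ k) : DecidableEq (ι k hk) := by unfold ι; infer_instance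

variable {I1 : Ideal (MvPolynomial (Fin (2 * k)) ℂ)}

/-- basis candidates -/
def v (I1 : Ideal (MvPolynomial (Fin (2 * k)) ℂ)) (L : Finset (Fin (2 * k))) :
    MvPolynomial (Fin (2 * k)) ℂ ⧸ I1 :=
  Ideal.Quotient.mk I1 (pL L)

lemma indep (hk : 1 ≤ k) (hI1 : I1 = Ideal.span (gens1 (2 * k) k)) :
    LinearIndependent ℂ (fun L : ι k hk => v k I1 L.1) := by
  classical
  rw [linearIndependent_iff']
  intro s g hsum L0 hL0
  have hmem : (∑ L ∈ s, g L • pL L.1) ∈ I1 := by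
    rw [← Ideal.Quotient.eq_zero_iff_mem]
    rw [← hsum]
    rw [← Ideal.Quotient.mkₐ_eq_mk ℂ I1, map_sum]
    refine Finset.sum_congr rfl fun L _ => ?_
    rw [map_smul, Ideal.Quotient.mkₐ_eq_mk]
    rfl
  rw [hI1] at hmem
  have hco := coeff_dI_eq_zero (le_of_eq L0.2.1) hmem
  rw [coeff_sum] at hco
  have hterm : ∀ L : ι k hk, L ∈ s →
      coeff (dI L0.1) (g L • pL L.1) = if L = L0 then g L else 0 := by
    intro L _
    rw [coeff_smul, pL, coeff_sub, coeff_prod_X, coeff_prod_X]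
    have hc : L.1ᶜ ≠ L0.1 := by
      intro h
      have := L0.2.2
      rw [← h, Finset.mem_compl] at this
      exact this L.2.2
    rw [if_neg hc]
    by_cases h : L = L0
    · subst h
      rw [if_pos rfl, if_pos rfl]
      simp
    · rw [if_neg (fun hc' => h (Subtype.ext hc')), if_neg h]
      simp
  rw [Finset.sum_congr rfl hterm, Finset.sum_ite_eq' s L0 g, if_pos hL0] at hco
  exact hco

lemma span_eq (hk : 1 ≤ k) (S : Submodule ℂ (MvPolynomial (Fin (2 * k)) ℂ ⧸ I1))
    (hS : S = Submodule.span ℂ { z | ∃ L : Finset (Fin (2 * k)), L.card = k ∧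
        z = Ideal.Quotient.mk I1 ((∏ i ∈ L, X i) - ∏ i ∈ Lᶜ, X i) }) :
    S = Submodule.span ℂ (Set.range (fun L : ι k hk => v k I1 L.1)) := by
  rw [hS]
  apply le_antisymm
  · rw [Submodule.span_le]
    rintro z ⟨L, hL, rfl⟩
    by_cases h0 : i0 k hk ∈ L
    · exact Submodule.subset_span ⟨⟨L, hL, h0⟩, rfl⟩
    · have h0' : i0 k hk ∈ Lᶜ := Finset.mem_compl.mpr h0
      have : Ideal.Quotient.mk I1 (pL L) = -(v k I1 Lᶜ) := by
        rw [v, pL_compl, map_neg, neg_neg]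
      show Ideal.Quotient.mk I1 (pL L) ∈ _
      rw [this]
      exact neg_mem (Submodule.subset_span ⟨⟨Lᶜ, card_compl_eq hL, h0'⟩, rfl⟩)
  · rw [Submodule.span_le]
    rintro z ⟨L, rfl⟩
    exact Submodule.subset_span ⟨L.1, L.2.1, rfl⟩

lemma card_ι (hk : 1 ≤ k) : 2 * Fintype.card (ι k hk) = (2 * k).choose k := by
  classical
  unfold ι
  rw [show @Fintype.card {L : Finset (Fin (2 * k)) // L.card = k ∧ i0 k hk ∈ L} (instFintypeι k hk) =
      Fintype.card {L : Finset (Fin (2 * k)) // L.card = k ∧ i0 k hk ∈ L} from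
      Fintype.card_congr (Equiv.refl _), Fintype.card_subtype]
  have hbij : (Finset.univ.filter (fun L : Finset (Fin (2 * k)) =>
        L.card = k ∧ i0 k hk ∈ L)).card =
      (Finset.univ.filter (fun L : Finset (Fin (2 * k)) =>
        L.card = k ∧ ¬(i0 k hk ∈ L))).card := by
    apply Finset.card_bij (fun L _ => Lᶜ)
    · intro L hL
      simp only [Finset.mem_filter, Finset.mem_univ, true_and] at hL ⊢
      exact ⟨card_compl_eq hL.1, by simp [hL.2]⟩
    · intro a ha b hb hab
      rw [← compl_compl a, hab, compl_compl]
    · intro L hL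
      simp only [Finset.mem_filter, Finset.mem_univ, true_and] at hL
      refine ⟨Lᶜ, ?_, by rw [compl_compl]⟩
      simp only [Finset.mem_filter, Finset.mem_univ, true_and]
      exact ⟨card_compl_eq hL.1, by simpa using hL.2⟩
  have hsplit := Finset.card_filter_add_card_filter_not
    (s := Finset.univ.filter (fun L : Finset (Fin (2 * k)) => L.card = k))
    (p := fun L => i0 k hk ∈ L)
  rw [Finset.filter_filter, Finset.filter_filter] at hsplit
  have hpow : (Finset.univ.filter (fun L : Finset (Fin (2 * k)) => L.card = k)).card =
      (2 * k).choose k := by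
    rw [← Finset.powerset_univ, ← Finset.powersetCard_eq_filter,
      Finset.card_powersetCard, Finset.card_univ, Fintype.card_fin]
  omega

end Quot

end Stmt15Aux

namespace Stmt15Aux

lemma image_compl {m : ℕ} (σ : Equiv.Perm (Fin m)) (L : Finset (Fin m)) :
    Finset.image σ Lᶜ = (Finset.image σ L)ᶜ := by
  classical
  ext j
  simp only [Finset.mem_image, Finset.mem_compl]
  constructor
  · rintro ⟨a, ha, rfl⟩ ⟨b, hb, hba⟩
    exact ha (σ.injective hba ▸ hb)
  · intro h
    exact ⟨σ.symm j, fun hmem => h ⟨σ.symm j, hmem, σ.apply_symm_apply j⟩,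
      σ.apply_symm_apply j⟩

lemma signedMap_prod {m : ℕ} (σ : Equiv.Perm (Fin m)) (ε : Fin m → ℂ)
    (L : Finset (Fin m)) :
    signedMap σ ε (∏ i ∈ L, X i) = C (∏ i ∈ L, ε i) * ∏ j ∈ Finset.image σ L, X j := by
  classical
  rw [map_prod]
  have : ∀ i ∈ L, signedMap σ ε (X i) = C (ε i) * X (σ i) := by
    intro i _
    simp [signedMap]
  rw [Finset.prod_congr rfl this, Finset.prod_mul_distrib,
    ← map_prod (C : ℂ →+* MvPolynomial (Fin m) ℂ) (fun i => ε i) L]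
  congr 1
  rw [Finset.prod_image]
  intro x _ y _ h
  exact σ.injective h

lemma prod_sign_compl {m : ℕ} {ε : Fin m → ℂ} (hε : ∀ i, ε i = 1 ∨ ε i = -1)
    (hprod : ∏ i, ε i = 1) (L : Finset (Fin m)) :
    ∏ i ∈ Lᶜ, ε i = ∏ i ∈ L, ε i := by
  classical
  have hmul : (∏ i ∈ L, ε i) * ∏ i ∈ Lᶜ, ε i = 1 := by
    rw [Finset.prod_mul_prod_compl]; exact hprod
  have hsq : (∏ i ∈ L, ε i) * ∏ i ∈ L, ε i = 1 := by
    rw [← Finset.prod_mul_distrib]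
    refine Finset.prod_eq_one fun i _ => ?_
    rcases hε i with h | h <;> rw [h] <;> norm_num
  have hne : (∏ i ∈ L, ε i) ≠ 0 := fun h => by rw [h, zero_mul] at hsq; norm_num at hsq
  exact mul_left_cancel₀ hne (hmul.trans hsq.symm)

lemma signedMap_pL {m : ℕ} (σ : Equiv.Perm (Fin m)) (ε : Fin m → ℂ)
    (hε : ∀ i, ε i = 1 ∨ ε i = -1) (hprod : ∏ i, ε i = 1) (L : Finset (Fin m)) :
    signedMap σ ε (pL L) = C (∏ i ∈ L, ε i) * pL (Finset.image σ L) := by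
  rw [pL, map_sub, signedMap_prod, signedMap_prod, prod_sign_compl hε hprod,
    image_compl, pL, mul_sub]

lemma exists_perm_image {m : ℕ} (s t : Finset (Fin m)) (h : s.card = t.card) :
    ∃ σ : Equiv.Perm (Fin m), Finset.image σ s = t := by
  classical
  have h1 : Fintype.card {x // x ∈ s} = Fintype.card {x // x ∈ t} := by
    simp only [Fintype.card_coe, h]
  have h2 : Fintype.card {x // ¬ x ∈ s} = Fintype.card {x // ¬ x ∈ t} := by
    rw [Fintype.card_subtype_compl, Fintype.card_subtype_compl, h1]
  set e := Fintype.equivOfCardEq h1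
  set f := Fintype.equivOfCardEq h2
  refine ⟨Equiv.subtypeCongr e f, ?_⟩
  have hmaps : ∀ a, a ∈ s → Equiv.subtypeCongr e f a ∈ t := by
    intro a ha
    have : Equiv.subtypeCongr e f a = (e ⟨a, ha⟩ : Fin m) := by
      simp [Equiv.subtypeCongr, Equiv.sumCompl_symm_apply_of_pos ha]
    rw [this]
    exact (e ⟨a, ha⟩).2
  apply Finset.eq_of_subset_of_card_le
  · intro j hj
    rw [Finset.mem_image] at hj
    obtain ⟨a, ha, rfl⟩ := hj
    exact hmaps a ha
  · rw [Finset.card_image_of_injective _ (Equiv.subtypeCongr e f).injective, h]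

/-- the generating set of `I2` -/
def gens2 (n k : ℕ) : Set (MvPolynomial (Fin n) ℂ) :=
  { q | ∃ i : Fin n, q = X i ^ 2 } ∪
    { q | ∃ L : Finset (Fin n), L.card = k ∧ q = (∏ i ∈ L, X i) - ∏ i ∈ Lᶜ, X i }

variable {k : ℕ} {I1 : Ideal (MvPolynomial (Fin (2 * k)) ℂ)}

lemma mk_mul_mem_S (hI1 : I1 = Ideal.span (gens1 (2 * k) k))
    (S : Submodule ℂ (MvPolynomial (Fin (2 * k)) ℂ ⧸ I1))
    (hS : S = Submodule.span ℂ { z | ∃ L : Finset (Fin (2 * k)), L.card = k ∧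
        z = Ideal.Quotient.mk I1 ((∏ i ∈ L, X i) - ∏ i ∈ Lᶜ, X i) }) :
    ∀ p ∈ Ideal.span (gens2 (2 * k) k), ∀ a, Ideal.Quotient.mk I1 (a * p) ∈ S := by
  intro p hp
  refine Submodule.span_induction ?_ ?_ ?_ ?_ hp
  · rintro x (⟨i, rfl⟩ | ⟨L, hL, rfl⟩) a
    · have hmem : a * X i ^ 2 ∈ I1 := by
        rw [hI1]
        exact Ideal.mul_mem_left _ a (Ideal.subset_span (Or.inl ⟨i, rfl⟩))
      rw [Ideal.Quotient.eq_zero_iff_mem.mpr hmem]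
      exact zero_mem S
    · have hmem := mul_prod_sub_mem (k := k) hL (card_compl_eq hL) a
      rw [← hI1] at hmem
      have heq : Ideal.Quotient.mk I1 (a * ((∏ i ∈ L, X i) - ∏ i ∈ Lᶜ, X i)) =
          Ideal.Quotient.mk I1 (C (coeff 0 a) * ((∏ i ∈ L, X i) - ∏ i ∈ Lᶜ, X i)) :=
        Ideal.Quotient.eq.mpr hmem
      rw [heq, ← smul_eq_C_mul, ← Ideal.Quotient.mkₐ_eq_mk ℂ I1, map_smul]
      refine Submodule.smul_mem _ _ ?_
      rw [Ideal.Quotient.mkₐ_eq_mk]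
      exact hS ▸ Submodule.subset_span ⟨L, hL, rfl⟩
  · intro a
    rw [mul_zero, map_zero]
    exact zero_mem S
  · intro x y _ _ hx hy a
    rw [mul_add, map_add]
    exact add_mem (hx a) (hy a)
  · intro r x _ hx a
    rw [smul_eq_mul, ← mul_assoc]
    exact hx (a * r)

end Stmt15Aux

namespace Stmt15Aux

variable {k : ℕ} {I1 : Ideal (MvPolynomial (Fin (2 * k)) ℂ)}

lemma irred (hk : 1 ≤ k) (hI1 : I1 = Ideal.span (gens1 (2 * k) k))
    (S : Submodule ℂ (MvPolynomial (Fin (2 * k)) ℂ ⧸ I1))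
    (hS : S = Submodule.span ℂ { z | ∃ L : Finset (Fin (2 * k)), L.card = k ∧
        z = Ideal.Quotient.mk I1 ((∏ i ∈ L, X i) - ∏ i ∈ Lᶜ, X i) })
    (U : Submodule ℂ (MvPolynomial (Fin (2 * k)) ℂ ⧸ I1)) (hUle : U ≤ S)
    (hUinv : ∀ (σ : Equiv.Perm (Fin (2 * k))) (ε : Fin (2 * k) → ℂ),
        (∀ i, ε i = 1 ∨ ε i = -1) → (∏ i, ε i) = 1 →
        ∀ q : MvPolynomial (Fin (2 * k)) ℂ, Ideal.Quotient.mk I1 q ∈ U →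
          Ideal.Quotient.mk I1 (signedMap σ ε q) ∈ U) :
    U = ⊥ ∨ U = S := by
  classical
  by_cases hbot : U = ⊥
  · exact Or.inl hbot
  right
  have hmk : ∀ (s : Finset (ι k hk)) (c : ι k hk → ℂ) (F : ι k hk → Finset (Fin (2 * k))),
      Ideal.Quotient.mk I1 (∑ M ∈ s, c M • pL (F M)) = ∑ M ∈ s, c M • v k I1 (F M) := by
    intro s c F
    rw [← Ideal.Quotient.mkₐ_eq_mk ℂ I1, map_sum]
    refine Finset.sum_congr rfl fun M _ => ?_
    rw [map_smul, Ideal.Quotient.mkₐ_eq_mk]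
    rfl
  have haction : ∀ (σ : Equiv.Perm (Fin (2 * k))) (ε : Fin (2 * k) → ℂ),
      (∀ i, ε i = 1 ∨ ε i = -1) → (∏ i, ε i) = 1 →
      ∀ (s : Finset (ι k hk)) (c : ι k hk → ℂ),
      (∑ M ∈ s, c M • v k I1 M.1) ∈ U →
      (∑ M ∈ s, (c M * ∏ i ∈ M.1, ε i) • v k I1 (Finset.image σ M.1)) ∈ U := by
    intro σ ε hε hprod s c hc
    have hval := hUinv σ ε hε hprod _ ((hmk s c (fun M => M.1)).symm ▸ hc)
    have h2 : signedMap σ ε (∑ M ∈ s, c M • pL M.1)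
        = ∑ M ∈ s, (c M * ∏ i ∈ M.1, ε i) • pL (Finset.image σ M.1) := by
      rw [map_sum]
      refine Finset.sum_congr rfl fun M _ => ?_
      rw [map_smul, signedMap_pL σ ε hε hprod, ← smul_eq_C_mul, smul_smul, mul_comm (c M)]
    rw [h2, hmk s _ (fun M => Finset.image σ M.1)] at hval
    convert hval using 2
  have key : ∀ s : Finset (ι k hk), ∀ c : ι k hk → ℂ,
      (∑ M ∈ s, c M • v k I1 M.1) ∈ U → ∀ L0 ∈ s, c L0 • v k I1 L0.1 ∈ U := by
    intro s
    induction s using Finset.strongInduction with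
    | _ s ih =>
      intro c hc L0 hL0
      by_cases hex : ∃ L1 ∈ s, L1 ≠ L0
      · obtain ⟨L1, hL1, hne⟩ := hex
        obtain ⟨i, hi⟩ : (L0.1 \ L1.1).Nonempty := by
          rw [Finset.sdiff_nonempty]
          intro hsub
          exact hne (Subtype.ext (Finset.eq_of_subset_of_card_le hsub
            (le_of_eq (L1.2.1.trans L0.2.1.symm))).symm)
        rw [Finset.mem_sdiff] at hi
        have hcard : (L0.1 ∪ L1.1).card < 2 * k := by
          have h0 : i0 k hk ∈ L0.1 ∩ L1.1 := Finset.mem_inter.mpr ⟨L0.2.2, L1.2.2⟩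
          have hci := Finset.card_union_add_card_inter L0.1 L1.1
          have hic : 1 ≤ (L0.1 ∩ L1.1).card := Finset.card_pos.mpr ⟨_, h0⟩
          have h01 := L0.2.1
          have h11 := L1.2.1
          omega
        obtain ⟨j, hj⟩ : ((L0.1 ∪ L1.1)ᶜ).Nonempty := by
          rw [← Finset.card_pos, Finset.card_compl, Fintype.card_fin]
          omega
        rw [Finset.mem_compl, Finset.mem_union] at hj
        push_neg at hj
        have hji : j ≠ i := fun h => hj.1 (h ▸ hi.1)
        set ε : Fin (2 * k) → ℂ := fun m => if m = i ∨ m = j then -1 else 1 with hεdef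
        have hε : ∀ m, ε m = 1 ∨ ε m = -1 := by
          intro m
          by_cases h : m = i ∨ m = j
          · exact Or.inr (by simp [hεdef, h])
          · exact Or.inl (by simp [hεdef, h])
        have hprod : ∏ m, ε m = 1 := by
          rw [← Finset.prod_mul_prod_compl ({i, j} : Finset (Fin (2 * k)))]
          have h1 : ∏ m ∈ ({i, j} : Finset (Fin (2 * k))), ε m = 1 := by
            rw [Finset.prod_pair (Ne.symm hji)]
            simp [hεdef, Ne.symm hji]
          have h2 : ∏ m ∈ ({i, j} : Finset (Fin (2 * k)))ᶜ, ε m = 1 := by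
            refine Finset.prod_eq_one fun m hm => ?_
            rw [Finset.mem_compl, Finset.mem_insert, Finset.mem_singleton] at hm
            push_neg at hm
            simp [hεdef, hm.1, hm.2]
          rw [h1, h2, one_mul]
        have hsign1 : ∀ A : Finset (Fin (2 * k)), i ∈ A → j ∉ A → ∏ m ∈ A, ε m = -1 := by
          intro A hiA hjA
          rw [← Finset.prod_erase_mul A _ hiA]
          have hrest : ∏ m ∈ A.erase i, ε m = 1 := by
            refine Finset.prod_eq_one fun m hm => ?_
            have hmi := Finset.ne_of_mem_erase hm
            have hmj : m ≠ j := fun h => hjA (h ▸ Finset.mem_of_mem_erase hm)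
            simp [hεdef, hmi, hmj]
          rw [hrest, one_mul]
          simp [hεdef]
        have hsign2 : ∀ A : Finset (Fin (2 * k)), i ∉ A → j ∉ A → ∏ m ∈ A, ε m = 1 := by
          intro A hiA hjA
          refine Finset.prod_eq_one fun m hm => ?_
          have hmi : m ≠ i := fun h => hiA (h ▸ hm)
          have hmj : m ≠ j := fun h => hjA (h ▸ hm)
          simp [hεdef, hmi, hmj]
        have hact := haction 1 ε hε hprod s c hc
        simp only [Equiv.Perm.coe_one, Finset.image_id] at hact
        set c' : ι k hk → ℂ := fun M => 2⁻¹ * (c M - c M * ∏ m ∈ M.1, ε m) with hc'def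
        have hw' : (2⁻¹ : ℂ) • ((∑ M ∈ s, c M • v k I1 M.1) -
              ∑ M ∈ s, (c M * ∏ m ∈ M.1, ε m) • v k I1 M.1)
            = ∑ M ∈ s, c' M • v k I1 M.1 := by
          rw [← Finset.sum_sub_distrib, Finset.smul_sum]
          refine Finset.sum_congr rfl fun M _ => ?_
          rw [← sub_smul, smul_smul]
        have hη0 : ∏ m ∈ L0.1, ε m = -1 := hsign1 _ hi.1 hj.1
        have hη1 : ∏ m ∈ L1.1, ε m = 1 := hsign2 _ hi.2 hj.2
        have hzero : c' L1 • v k I1 L1.1 = 0 := by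
          have : c' L1 = 0 := by rw [hc'def]; simp only; rw [hη1]; ring
          rw [this, zero_smul]
        have hin : (∑ M ∈ s, c' M • v k I1 M.1) ∈ U := by
          rw [← hw']
          exact Submodule.smul_mem _ _ (sub_mem hc hact)
        have hsum' : (∑ M ∈ s.erase L1, c' M • v k I1 M.1) ∈ U := by
          rw [Finset.sum_erase s hzero]
          exact hin
        have hres := ih (s.erase L1) (Finset.erase_ssubset hL1) c' hsum' L0
          (Finset.mem_erase.mpr ⟨Ne.symm hne, hL0⟩)
        have hc'L0 : c' L0 = c L0 := by rw [hc'def]; simp only; rw [hη0]; ring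
        rwa [hc'L0] at hres
      · push_neg at hex
        have hsum : ∑ M ∈ s, c M • v k I1 M.1 = c L0 • v k I1 L0.1 :=
          Finset.sum_eq_single_of_mem L0 hL0 fun M hM hMne => absurd (hex M hM) hMne
        rwa [hsum] at hc
  obtain ⟨u, hu, hune⟩ := Submodule.ne_bot_iff U |>.mp hbot
  have huS : u ∈ Submodule.span ℂ (Set.range (fun L : ι k hk => v k I1 L.1)) := by
    rw [← span_eq k hk S hS]
    exact hUle hu
  obtain ⟨c, hcsum⟩ := (Submodule.mem_span_range_iff_exists_fun ℂ).mp huS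
  have hcex : ∃ L0 : ι k hk, c L0 ≠ 0 := by
    by_contra hall
    push_neg at hall
    apply hune
    rw [← hcsum]
    exact Finset.sum_eq_zero fun M _ => by rw [hall M, zero_smul]
  obtain ⟨L0, hcL0⟩ := hcex
  have hvL0 : v k I1 L0.1 ∈ U := by
    have := key Finset.univ c (by rw [hcsum]; exact hu) L0 (Finset.mem_univ _)
    have h2 := Submodule.smul_mem U (c L0)⁻¹ this
    rwa [smul_smul, inv_mul_cancel₀ hcL0, one_smul] at h2
  have hall : ∀ M : ι k hk, v k I1 M.1 ∈ U := by
    intro M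
    obtain ⟨σ, hσ⟩ := exists_perm_image L0.1 M.1 (L0.2.1.trans M.2.1.symm)
    have hone : ∀ i : Fin (2 * k), (fun _ : Fin (2 * k) => (1 : ℂ)) i = 1 ∨
        (fun _ : Fin (2 * k) => (1 : ℂ)) i = -1 := fun _ => Or.inl rfl
    have hpone : (∏ _i : Fin (2 * k), (1 : ℂ)) = 1 := by simp
    have hres := hUinv σ (fun _ => 1) hone hpone (pL L0.1) hvL0
    rw [signedMap_pL σ _ hone hpone L0.1, Finset.prod_const_one, map_one, one_mul, hσ] at hres
    exact hres
  refine le_antisymm hUle ?_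
  rw [span_eq k hk S hS]
  rw [Submodule.span_le]
  rintro z ⟨M, rfl⟩
  exact hall M

end Stmt15Aux

open Stmt15Aux

/-- for the surjection
`p : ℂ[y]/(y_i², y_K : |K|=k+1) ↠ ℂ[y]/I_{(2k,2k)}`, the kernel of `p` is the linear span
of the elements `y_L - y_{L̄}` (`|L| = k`), it has dimension `C(2k,k)/2`, and it is an
irreducible representation of the type `D_{2k}` Weyl group of evenly-signed permutations. -/
theorem stmt15 (k : ℕ) (hk : 1 ≤ k)
    (I1 I2 : Ideal (MvPolynomial (Fin (2 * k)) ℂ))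
    (hI1 : I1 = Ideal.span ({ q | ∃ i : Fin (2 * k), q = X i ^ 2 } ∪
      { q | ∃ K : Finset (Fin (2 * k)), K.card = k + 1 ∧ q = ∏ i ∈ K, X i }))
    (hI2 : I2 = Ideal.span ({ q | ∃ i : Fin (2 * k), q = X i ^ 2 } ∪
      { q | ∃ L : Finset (Fin (2 * k)), L.card = k ∧
          q = (∏ i ∈ L, X i) - ∏ i ∈ Lᶜ, X i }))
    (hle : I1 ≤ I2)
    (S : Submodule ℂ (MvPolynomial (Fin (2 * k)) ℂ ⧸ I1))
    (hS : S = Submodule.span ℂ { z | ∃ L : Finset (Fin (2 * k)), L.card = k ∧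
        z = Ideal.Quotient.mk I1 ((∏ i ∈ L, X i) - ∏ i ∈ Lᶜ, X i) }) :
    (RingHom.ker (Ideal.Quotient.factor (S := I1) (T := I2) hle) :
        Set (MvPolynomial (Fin (2 * k)) ℂ ⧸ I1)) = (S : Set _) ∧
    2 * Module.finrank ℂ S = (2 * k).choose k ∧
    ∀ U : Submodule ℂ (MvPolynomial (Fin (2 * k)) ℂ ⧸ I1), U ≤ S →
      (∀ (σ : Equiv.Perm (Fin (2 * k))) (ε : Fin (2 * k) → ℂ),
        (∀ i, ε i = 1 ∨ ε i = -1) → (∏ i, ε i) = 1 →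
        ∀ q : MvPolynomial (Fin (2 * k)) ℂ, Ideal.Quotient.mk I1 q ∈ U →
          Ideal.Quotient.mk I1 (signedMap σ ε q) ∈ U) →
      U = ⊥ ∨ U = S := by
  have hI1' : I1 = Ideal.span (gens1 (2 * k) k) := hI1
  have hI2' : I2 = Ideal.span (gens2 (2 * k) k) := hI2
  refine ⟨?_, ?_, ?_⟩
  · ext z
    simp only [SetLike.mem_coe]
    constructor
    · intro hz
      obtain ⟨p, rfl⟩ := Ideal.Quotient.mk_surjective z
      rw [RingHom.mem_ker, Ideal.Quotient.factor_mk, Ideal.Quotient.eq_zero_iff_mem] at hz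
      have := mk_mul_mem_S hI1' S hS p (hI2' ▸ hz) 1
      rwa [one_mul] at this
    · intro hz
      have hker : S ≤ (RingHom.ker (Ideal.Quotient.factor (S := I1) (T := I2) hle)).restrictScalars ℂ := by
        rw [hS, Submodule.span_le]
        rintro w ⟨L, hL, rfl⟩
        simp only [SetLike.mem_coe, Submodule.restrictScalars_mem, RingHom.mem_ker]
        rw [Ideal.Quotient.factor_mk, Ideal.Quotient.eq_zero_iff_mem, hI2']
        exact Ideal.subset_span (Or.inr ⟨L, hL, rfl⟩)
      exact hker hz
  · rw [span_eq k hk S hS, finrank_span_eq_card (indep k hk hI1'), card_ι k hk]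
  · intro U hUle hUinv
    exact irred hk hI1' S hS U hUle hUinv
end
end

section
/- Let $T_\lambda\subseteq\mathbb{C}[y_1,\dots,y_4]$ be the ideal for the partition $\lambda=(4,2,2)$ of $8$ (dual to $(b_1,b_1,b_2,b_2)=(3,3,1,1)$): explicitly, $T_\lambda$ is generated by $y_1^2+y_2^2+y_3^2+y_4^2$ and the products $y_i^2 y_j^2$ for all $1\leq i<j\leq 4$. Then $\dim_\mathbb{C}\mathbb{C}[y_1,\dots,y_4]/T_\lambda = \frac{4!\cdot 2^4}{3!\cdot 1!} = 64$. -/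
open MvPolynomial

noncomputable section
namespace Stmt16aux
set_option maxHeartbeats 1000000
set_option maxRecDepth 10000
set_option synthInstance.maxHeartbeats 400000

abbrev R3 := MvPolynomial (Fin 3) ℂ
abbrev R4 := MvPolynomial (Fin 4) ℂ

def J : Ideal R3 := Ideal.span { q | ∃ i j : Fin 3, q = X i ^ 2 * X j ^ 2 }

abbrev B := R3 ⧸ J

def mkJ : R3 →ₐ[ℂ] B := Ideal.Quotient.mkₐ ℂ J

/-- standard exponents -/
def StdB (d : Fin 3 →₀ ℕ) : Prop := ∀ i j : Fin 3, 2 ≤ d i → 2 ≤ d j → i = j ∧ d i ≤ 3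

lemma StdB_mono {d' d : Fin 3 →₀ ℕ} (h : d' ≤ d) (hd : StdB d) : StdB d' := by
  intro i j hi hj
  have h1 := h i; have h2 := h j
  have := hd i j (le_trans hi (h i)) (le_trans hj (h j))
  exact ⟨this.1, le_trans (h i) this.2⟩

def K : Ideal R3 where
  carrier := { x | ∀ d, StdB d → coeff d x = 0 }
  add_mem' := by intro a b ha hb d hd; rw [coeff_add, ha d hd, hb d hd, add_zero]
  zero_mem' := by intro d hd; simp
  smul_mem' := by
    intro c x hx d hd
    rw [smul_eq_mul, coeff_mul]
    refine Finset.sum_eq_zero fun p hp => ?_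
    have hpd : p.1 + p.2 = d := Finset.HasAntidiagonal.mem_antidiagonal.mp hp
    have hle : p.2 ≤ d := hpd ▸ le_add_self
    rw [hx p.2 (StdB_mono hle hd), mul_zero]

lemma J_le_K : J ≤ K := by
  rw [J, Ideal.span_le]
  rintro q ⟨i, j, rfl⟩
  intro d hd
  rw [X_pow_eq_monomial, X_pow_eq_monomial, monomial_mul, one_mul, coeff_monomial]
  split_ifs with h
  · exfalso
    have hi : 2 ≤ d i := by
      rw [← h]; simp [Finsupp.single_apply]
    have hj : 2 ≤ d j := by
      rw [← h]; simp [Finsupp.single_apply]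
    obtain ⟨rfl, h3⟩ := hd i j hi hj
    rw [← h] at h3; simp at h3
  · rfl

instance : Nontrivial B := by
  refine Ideal.Quotient.nontrivial_iff.mpr (fun hJ => ?_)
  have h1 : (1 : R3) ∈ K := J_le_K (hJ ▸ Submodule.mem_top)
  have := h1 0 (by intro i j hi; simp at hi)
  simp at this

def Good (g : Fin 3 → Fin 4) : Prop := ∀ i j, 2 ≤ (g i : ℕ) → 2 ≤ (g j : ℕ) → i = j

instance : DecidablePred Good := fun g => by unfold Good; infer_instance

abbrev GI := {g : Fin 3 → Fin 4 // Good g}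

lemma card_GI : Fintype.card GI = 32 := by decide

def dOf (g : Fin 3 → Fin 4) : Fin 3 →₀ ℕ := ∑ i : Fin 3, Finsupp.single i (g i : ℕ)

lemma dOf_apply (g : Fin 3 → Fin 4) (j : Fin 3) : dOf g j = (g j : ℕ) := by
  rw [dOf, Finsupp.finset_sum_apply]
  simp [Finsupp.single_apply]

lemma dOf_injective : Function.Injective dOf := by
  intro g g' h
  funext i
  have := congrArg (fun d => d i) h
  simp only [dOf_apply] at this
  exact Fin.ext this

def mOf (g : Fin 3 → Fin 4) : MvPolynomial (Fin 3) ℂ := ∏ i : Fin 3, X i ^ (g i : ℕ)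

lemma mOf_eq_monomial (g : Fin 3 → Fin 4) : mOf g = monomial (dOf g) 1 := by
  rw [mOf, dOf, monomial_sum_one]
  simp_rw [X_pow_eq_monomial]

lemma StdB_dOf (g : GI) : StdB (dOf g.1) := by
  intro i j hi hj
  rw [dOf_apply] at hi hj ⊢
  exact ⟨g.2 i j hi hj, (g.1 i).is_le⟩

lemma sum_B (c : GI → ℂ) (h : ∑ g : GI, c g • mkJ (mOf g.1) = 0) : ∀ g₀, c g₀ = 0 := by
  have h0 : mkJ (∑ g : GI, c g • mOf g.1) = 0 := by
    rw [map_sum]; simp_rw [map_smul]; exact h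
  have hmem : (∑ g : GI, c g • mOf g.1) ∈ J := by
    rwa [mkJ, Ideal.Quotient.mkₐ_eq_mk, Ideal.Quotient.eq_zero_iff_mem] at h0
  intro g₀
  have hK := J_le_K hmem (dOf g₀.1) (StdB_dOf g₀)
  rw [coeff_sum] at hK
  simp_rw [coeff_smul, mOf_eq_monomial, coeff_monomial, smul_eq_mul] at hK
  have heq : ∀ g : GI, ((c g : ℂ) * if dOf g.1 = dOf g₀.1 then 1 else 0)
      = if g = g₀ then c g else 0 := by
    intro g
    by_cases hgg : g = g₀
    · subst hgg; simp
    · rw [if_neg hgg, if_neg (fun hd => hgg (Subtype.ext (dOf_injective hd))), mul_zero]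
  rw [Finset.sum_congr rfl (fun g _ => heq g), Finset.sum_ite_eq' Finset.univ g₀ c,
    if_pos (Finset.mem_univ g₀)] at hK
  exact hK

def sB : B := mkJ (∑ i : Fin 3, X i ^ 2)

def fB : Polynomial B := Polynomial.X ^ 2 + Polynomial.C sB

lemma fB_monic : fB.Monic := Polynomial.monic_X_pow_add_C sB (by norm_num)

lemma fB_natDegree : fB.natDegree = 2 := Polynomial.natDegree_X_pow_add_C

abbrev Rt := AdjoinRoot fB

def rt : Rt := AdjoinRoot.root fB

def ofB : B →+* Rt := AdjoinRoot.of fB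

lemma rt_sq : rt ^ 2 = - ofB sB := by
  have h : AdjoinRoot.mk fB (Polynomial.X ^ 2 + Polynomial.C sB) = 0 := AdjoinRoot.mk_self
  rw [map_add, map_pow, AdjoinRoot.mk_X, AdjoinRoot.mk_C] at h
  exact eq_neg_of_add_eq_zero_left h

-- J-membership facts in B
lemma mkJ_sq_sq (i j : Fin 3) : mkJ (X i ^ 2 * X j ^ 2) = 0 := by
  rw [mkJ, Ideal.Quotient.mkₐ_eq_mk, Ideal.Quotient.eq_zero_iff_mem]
  exact Ideal.subset_span ⟨i, j, rfl⟩

lemma sB_mul_sq (j : Fin 3) : sB * mkJ (X j ^ 2) = 0 := by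
  rw [sB, ← map_mul, Finset.sum_mul]
  rw [map_sum]
  refine Finset.sum_eq_zero fun i _ => mkJ_sq_sq i j

-- basis of Rt over B
def bRt : Module.Basis (Fin 2) B Rt :=
  ((AdjoinRoot.powerBasis' fB_monic).basis).reindex (finCongr fB_natDegree)

lemma bRt_eq (e : Fin 2) : bRt e = rt ^ (e : ℕ) := by
  rw [bRt, Module.Basis.reindex_apply, (AdjoinRoot.powerBasis' fB_monic).basis_eq_pow]
  simp [rt, finCongr, AdjoinRoot.powerBasis']
  rfl

def v4 : Fin 4 → Rt := Fin.cases rt (fun i => ofB (mkJ (X i)))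

def ψ : R4 →ₐ[ℂ] Rt := aeval v4

lemma ψ_X0 : ψ (X 0) = rt := by rw [ψ, aeval_X, v4]; rfl

lemma ψ_Xsucc (i : Fin 3) : ψ (X i.succ) = ofB (mkJ (X i)) := by
  rw [ψ, aeval_X, v4]; rfl

def Tgens : Set R4 := {∑ i : Fin 4, X i ^ 2} ∪
  { q | ∃ i j : Fin 4, i ≠ j ∧ q = X i ^ 2 * X j ^ 2 }

lemma ψ_sum : ψ (∑ i : Fin 4, X i ^ 2) = 0 := by
  rw [map_sum, Fin.sum_univ_succ]
  simp_rw [map_pow, ψ_X0, ψ_Xsucc, rt_sq, ← map_pow, ← map_sum, sB]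
  rw [map_sum]
  simp_rw [map_pow]
  ring

lemma ψ_prod (i j : Fin 4) (hij : i ≠ j) : ψ (X i ^ 2 * X j ^ 2) = 0 := by
  rw [map_mul, map_pow, map_pow]
  induction i using Fin.cases with
  | zero =>
    induction j using Fin.cases with
    | zero => exact absurd rfl hij
    | succ j =>
      rw [ψ_X0, ψ_Xsucc, rt_sq, ← map_pow, ← map_pow, neg_mul, ← map_mul, sB_mul_sq,
        map_zero, neg_zero]
  | succ i =>
    induction j using Fin.cases with
    | zero =>
      rw [ψ_X0, ψ_Xsucc, rt_sq, ← map_pow, ← map_pow, mul_comm, neg_mul, ← map_mul,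
        sB_mul_sq, map_zero, neg_zero]
    | succ j =>
      simp only [ψ_Xsucc, ← map_pow, ← map_mul, mkJ_sq_sq, map_zero]

lemma ψ_gens : ∀ q ∈ Tgens, ψ q = 0 := by
  rintro q (rfl | ⟨i, j, hij, rfl⟩)
  · exact ψ_sum
  · exact ψ_prod i j hij

def Tsp : Ideal R4 := Ideal.span Tgens

def mkT : R4 →ₐ[ℂ] (R4 ⧸ Tsp) := Ideal.Quotient.mkₐ ℂ Tsp

lemma ψ_Tsp {q : R4} (hq : q ∈ Tsp) : ψ q = 0 := by
  have : Tsp ≤ RingHom.ker (ψ : R4 →ₐ[ℂ] Rt).toRingHom := by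
    rw [Tsp, Ideal.span_le]
    intro q hq
    simp only [SetLike.mem_coe, RingHom.mem_ker]
    exact ψ_gens q hq
  exact RingHom.mem_ker.mp (this hq)

def mOf4 (e : Fin 2) (g : Fin 3 → Fin 4) : R4 :=
  X 0 ^ (e : ℕ) * ∏ i : Fin 3, X i.succ ^ (g i : ℕ)

lemma ψ_mOf4 (e : Fin 2) (g : Fin 3 → Fin 4) :
    ψ (mOf4 e g) = rt ^ (e : ℕ) * ofB (mkJ (mOf g)) := by
  rw [mOf4, map_mul, map_pow, ψ_X0, map_prod]
  congr 1
  simp_rw [map_pow]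
  rw [Finset.prod_congr rfl (fun x _ => by rw [ψ_Xsucc] :
    ∀ x ∈ Finset.univ, ψ (X x.succ) ^ (g x:ℕ) = ofB (mkJ (X x)) ^ (g x:ℕ))]
  simp_rw [← map_pow]
  rw [← map_prod, ← map_prod]
  rfl

def vA (p : Fin 2 × GI) : R4 ⧸ Tsp := mkT (mOf4 p.1 p.2.1)

lemma li_vA : LinearIndependent ℂ vA := by
  rw [Fintype.linearIndependent_iff]
  intro c h
  have h0 : mkT (∑ p : Fin 2 × GI, c p • mOf4 p.1 p.2.1) = 0 := by
    rw [map_sum]; simp_rw [map_smul]; exact h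
  have hmem : (∑ p : Fin 2 × GI, c p • mOf4 p.1 p.2.1) ∈ Tsp := by
    rwa [mkT, Ideal.Quotient.mkₐ_eq_mk, Ideal.Quotient.eq_zero_iff_mem] at h0
  have hψ : ψ (∑ p : Fin 2 × GI, c p • mOf4 p.1 p.2.1) = 0 := ψ_Tsp hmem
  rw [map_sum] at hψ
  simp_rw [map_smul, ψ_mOf4] at hψ
  rw [Fintype.sum_prod_type] at hψ
  have hre : ∀ (e : Fin 2) (g : GI), c (e, g) • (rt ^ (e:ℕ) * ofB (mkJ (mOf g.1)))
      = (c (e, g) • mkJ (mOf g.1)) • bRt e := by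
    intro e g
    rw [bRt_eq, smul_assoc]
    congr 1
    rw [mul_comm]
    exact (Algebra.smul_def (mkJ (mOf g.1)) (rt ^ (e:ℕ))).symm
  rw [Finset.sum_congr rfl (fun x _ => Finset.sum_congr rfl (fun y _ => hre x y))] at hψ
  have hψ2 : ∑ x : Fin 2, (∑ y : GI, c (x, y) • mkJ (mOf y.1)) • bRt x = 0 :=
    by refine Eq.trans (Finset.sum_congr rfl fun x _ => ?_) hψ; exact Finset.sum_smul (R := B) (M := Rt)
  have hβ := Fintype.linearIndependent_iff.mp bRt.linearIndependent
      (fun e => ∑ g : GI, c (e, g) • mkJ (mOf g.1)) hψ2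
  intro p
  exact sum_B (fun g => c (p.1, g)) (hβ p.1) p.2

lemma sum_mem_Tsp : (∑ i : Fin 4, X i ^ 2 : R4) ∈ Tsp := Ideal.subset_span (Or.inl rfl)

lemma prod_mem_Tsp {i j : Fin 4} (h : i ≠ j) : (X i ^ 2 * X j ^ 2 : R4) ∈ Tsp :=
  Ideal.subset_span (Or.inr ⟨i, j, h, rfl⟩)

lemma X4_mem_Tsp (k : Fin 4) : (X k ^ 4 : R4) ∈ Tsp := by
  have hid : (X k ^ 4 : R4) = X k ^ 2 * (∑ i : Fin 4, X i ^ 2)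
      - ∑ i ∈ Finset.univ.erase k, X k ^ 2 * X i ^ 2 := by
    rw [Finset.mul_sum, ← Finset.add_sum_erase _ _ (Finset.mem_univ k)]
    ring
  rw [hid]
  exact Ideal.sub_mem _ (Ideal.mul_mem_left _ _ sum_mem_Tsp)
    (Ideal.sum_mem _ (fun i hi => prod_mem_Tsp (Finset.ne_of_mem_erase hi).symm))

lemma monomial_dvd_mem {d E : Fin 4 →₀ ℕ} (hE : E ≤ d) (hmem : (monomial E 1 : R4) ∈ Tsp) :
    (monomial d 1 : R4) ∈ Tsp := by
  have : (monomial d 1 : R4) = monomial E 1 * monomial (d - E) 1 := by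
    rw [monomial_mul, one_mul, add_tsub_cancel_of_le hE]
  rw [this]
  exact Ideal.mul_mem_right _ _ hmem

lemma monomial_bad_mem {d : Fin 4 →₀ ℕ} (i j : Fin 4) (hij : i ≠ j)
    (hi : 2 ≤ d i) (hj : 2 ≤ d j) : (monomial d 1 : R4) ∈ Tsp := by
  refine monomial_dvd_mem (E := Finsupp.single i 2 + Finsupp.single j 2) ?_ ?_
  · rw [Finsupp.le_def]
    intro k
    simp only [Finsupp.add_apply, Finsupp.single_apply]
    by_cases h1 : i = k
    · by_cases h2 : j = k
      · exact absurd (h1.trans h2.symm) hij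
      · rw [if_pos h1, if_neg h2, add_zero, ← h1]; exact hi
    · rw [if_neg h1, zero_add]
      by_cases h2 : j = k
      · rw [if_pos h2, ← h2]; exact hj
      · rw [if_neg h2]; omega
  · have : (monomial (Finsupp.single i 2 + Finsupp.single j 2) 1 : R4) = X i ^ 2 * X j ^ 2 := by
      rw [X_pow_eq_monomial, X_pow_eq_monomial, monomial_mul, one_mul]
    rw [this]
    exact prod_mem_Tsp hij

lemma monomial_four_mem {d : Fin 4 →₀ ℕ} (i : Fin 4) (hi : 4 ≤ d i) :
    (monomial d 1 : R4) ∈ Tsp := by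
  refine monomial_dvd_mem (E := Finsupp.single i 4) ?_ ?_
  · rw [Finsupp.le_def]
    intro k
    simp only [Finsupp.single_apply]
    by_cases h1 : i = k
    · rw [if_pos h1, ← h1]; exact hi
    · rw [if_neg h1]; omega
  · rw [← X_pow_eq_monomial]
    exact X4_mem_Tsp i

-- sum-of-singles applications
lemma sum_single_succ_zero (a : Fin 3 → ℕ) :
    (∑ i : Fin 3, Finsupp.single i.succ (a i)) (0 : Fin 4) = 0 := by
  rw [Finsupp.finset_sum_apply]
  refine Finset.sum_eq_zero fun i _ => ?_
  rw [Finsupp.single_apply, if_neg (Fin.succ_ne_zero i)]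

lemma sum_single_succ_succ (a : Fin 3 → ℕ) (j : Fin 3) :
    (∑ i : Fin 3, Finsupp.single i.succ (a i)) j.succ = a j := by
  rw [Finsupp.finset_sum_apply]
  have : ∀ i : Fin 3, (Finsupp.single i.succ (a i)) j.succ = if i = j then a i else 0 := by
    intro i
    rw [Finsupp.single_apply]
    rcases eq_or_ne i j with rfl | h
    · simp
    · rw [if_neg (fun hh => h (Fin.succ_injective _ hh)), if_neg h]
  rw [Finset.sum_congr rfl (fun i _ => this i), Finset.sum_ite_eq' Finset.univ j a,
    if_pos (Finset.mem_univ j)]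

lemma mOf4_eq_monomial (e : Fin 2) (g : Fin 3 → Fin 4) :
    mOf4 e g = monomial (Finsupp.single 0 (e : ℕ) +
      ∑ i : Fin 3, Finsupp.single i.succ ((g i : ℕ))) 1 := by
  rw [mOf4]
  simp_rw [X_pow_eq_monomial]
  rw [← monomial_sum_one, monomial_mul, mul_one]

def SpanV : Submodule ℂ (R4 ⧸ Tsp) := Submodule.span ℂ (Set.range vA)

lemma mono_mem_span : ∀ (n : ℕ) (d : Fin 4 →₀ ℕ), d 0 ≤ n → mkT (monomial d 1) ∈ SpanV := by
  intro n
  induction n using Nat.strong_induction_on with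
  | _ n IH =>
  intro d hd
  by_cases hd0 : d 0 ≤ 1
  · by_cases hbad : ∃ i j : Fin 3, 2 ≤ d i.succ ∧ 2 ≤ d j.succ ∧ (i = j → 4 ≤ d i.succ)
    · obtain ⟨i, j, hi, hj, hij⟩ := hbad
      have hz : mkT (monomial d 1) = 0 := by
        rw [mkT, Ideal.Quotient.mkₐ_eq_mk, Ideal.Quotient.eq_zero_iff_mem]
        rcases eq_or_ne i j with rfl | hne
        · exact monomial_four_mem i.succ (hij rfl)
        · exact monomial_bad_mem i.succ j.succ
            (fun hh => hne (Fin.succ_injective _ hh)) hi hj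
      rw [hz]; exact Submodule.zero_mem _
    · push_neg at hbad
      have hle3 : ∀ i : Fin 3, d i.succ ≤ 3 := by
        intro i
        by_cases h2 : 2 ≤ d i.succ
        · have := (hbad i i h2 h2).2; omega
        · omega
      set g : Fin 3 → Fin 4 := fun i => ⟨d i.succ, by have := hle3 i; omega⟩ with hg
      have hgood : Good g := by
        intro i j hi hj
        exact (hbad i j hi hj).1
      have he : d 0 < 2 := by omega
      have hexp : Finsupp.single (0 : Fin 4) (((⟨d 0, he⟩ : Fin 2)) : ℕ) +
          ∑ i : Fin 3, Finsupp.single i.succ ((g i : ℕ)) = d := by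
        ext k
        induction k using Fin.cases with
        | zero =>
          rw [Finsupp.add_apply, sum_single_succ_zero, Finsupp.single_apply, if_pos rfl,
            add_zero]
        | succ k =>
          rw [Finsupp.add_apply, sum_single_succ_succ, Finsupp.single_apply,
            if_neg (Fin.succ_ne_zero k).symm, zero_add]
      have hmono : monomial d (1 : ℂ) = mOf4 ⟨d 0, he⟩ g := by
        rw [mOf4_eq_monomial, hexp]
      rw [hmono]
      exact Submodule.subset_span ⟨(⟨d 0, he⟩, ⟨g, hgood⟩), rfl⟩
  · -- d 0 ≥ 2 : reduce using the sum relation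
    push_neg at hd0
    have hn2 : 2 ≤ n := by omega
    set d' : Fin 4 →₀ ℕ := d - Finsupp.single 0 2 with hd'
    have hsingle_le : Finsupp.single (0 : Fin 4) 2 ≤ d := by
      rw [Finsupp.le_def]
      intro k
      rw [Finsupp.single_apply]
      split_ifs with h
      · rw [← h]; omega
      · omega
    have hsplit : (monomial d 1 : R4) = X 0 ^ 2 * monomial d' 1 := by
      rw [X_pow_eq_monomial, monomial_mul, one_mul, hd', add_tsub_cancel_of_le hsingle_le]
    have key : mkT (monomial d 1) + ∑ i : Fin 3, mkT (X i.succ ^ 2 * monomial d' 1) = 0 := by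
      rw [hsplit, ← map_sum, ← map_add,
        ← Fin.sum_univ_succ (f := fun i : Fin 4 => (X i ^ 2 * monomial d' 1 : R4)),
        ← Finset.sum_mul]
      rw [mkT, Ideal.Quotient.mkₐ_eq_mk, Ideal.Quotient.eq_zero_iff_mem]
      exact Ideal.mul_mem_right _ _ sum_mem_Tsp
    rw [eq_neg_of_add_eq_zero_left key]
    refine Submodule.neg_mem _ (Submodule.sum_mem _ fun i _ => ?_)
    have hXm : (X i.succ ^ 2 * monomial d' 1 : R4)
        = monomial (Finsupp.single i.succ 2 + d') 1 := by
      rw [X_pow_eq_monomial, monomial_mul, one_mul]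
    rw [hXm]
    refine IH (n - 1) (by omega) _ ?_
    have h0' : (Finsupp.single i.succ 2 + d' : Fin 4 →₀ ℕ) 0 = d 0 - 2 := by
      rw [Finsupp.add_apply, Finsupp.single_apply, if_neg (Fin.succ_ne_zero i), hd',
        Finsupp.tsub_apply, Finsupp.single_apply, if_pos rfl, zero_add]
    omega

lemma span_vA_top : ⊤ ≤ Submodule.span ℂ (Set.range vA) := by
  intro x _
  obtain ⟨p, rfl⟩ := Ideal.Quotient.mkₐ_surjective ℂ (I := Tsp) x
  rw [← p.support_sum_monomial_coeff, map_sum]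
  refine Submodule.sum_mem _ fun d hd => ?_
  have h1 : (monomial d (coeff d p) : R4) = (coeff d p) • monomial d 1 := by
    rw [smul_monomial, smul_eq_mul, mul_one]
  rw [h1, map_smul]
  exact Submodule.smul_mem _ _ (mono_mem_span (d 0) d le_rfl)

lemma finrank_aux : Module.finrank ℂ (R4 ⧸ Tsp) = 64 := by
  have b : Module.Basis (Fin 2 × GI) ℂ (R4 ⧸ Tsp) := Module.Basis.mk li_vA span_vA_top
  rw [Module.finrank_eq_card_basis b, Fintype.card_prod, card_GI, Fintype.card_fin]

end Stmt16aux

/-- for the partition `λ = (4,2,2)` of `8`, the ideal `T_λ ⊆ ℂ[y₁,…,y₄]`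
generated by `y₁²+y₂²+y₃²+y₄²` and the products `y_i² y_j²` (`i < j`) has quotient of
dimension `4! · 2⁴ / (3! · 1!) = 64`. -/
theorem stmt16 (T : Ideal (MvPolynomial (Fin 4) ℂ))
    (hT : T = Ideal.span ({∑ i : Fin 4, X i ^ 2} ∪
      { q | ∃ i j : Fin 4, i ≠ j ∧ q = X i ^ 2 * X j ^ 2 })) :
    Module.finrank ℂ (MvPolynomial (Fin 4) ℂ ⧸ T) = 64 := by
  subst hT
  exact Stmt16aux.finrank_aux
end
end

section
/- Let $I\subseteq\mathbb{C}[y_1,\dots,y_5]$ be the ideal generated by: $y_i^5$ for $1\leq i\leq 5$; the power sums $\sum_{i=1}^5 y_i^{2j}$ for $1\leq j\leq 5$; and all products $y_i y_j y_k$ for $1\leq i<j<k\leq 5$. Then the monomial $y_1^2 y_2^2$ is nonzero in the quotient ring $\mathbb{C}[y_1,\dots,y_5]/I$. -/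
open MvPolynomial Finsupp

noncomputable section

/-- The apolarity functional associated to `F = -z₁⁴-z₂⁴+z₃⁴+z₄⁴+6z₁²z₂²-6z₃²z₄²`. -/
def lam17 (p : MvPolynomial (Fin 5) ℂ) : ℂ :=
  - coeff (single 0 4) p - coeff (single 1 4) p + coeff (single 2 4) p
  + coeff (single 3 4) p + coeff (single 0 2 + single 1 2) p
  - coeff (single 2 2 + single 3 2) p

lemma prodX17 (K : Finset (Fin 5)) :
    (∏ i ∈ K, X i : MvPolynomial (Fin 5) ℂ) = monomial (∑ i ∈ K, single i 1) 1 := by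
  classical
  induction K using Finset.induction with
  | empty => simp
  | insert a s h ih =>
      rw [Finset.prod_insert h, Finset.sum_insert h, ih, X, monomial_mul, one_mul]

lemma notle17 (K : Finset (Fin 5)) (hK : K.card = 3) (a b : Fin 5) (x y : ℕ) :
    ¬ (∑ i ∈ K, single i 1 : Fin 5 →₀ ℕ) ≤ single a x + single b y := by
  intro hle
  have hsub : ¬ K ⊆ ({a, b} : Finset (Fin 5)) := by
    intro h
    have := Finset.card_le_card h
    have h2 := Finset.card_insert_le a ({b} : Finset (Fin 5))
    simp [Finset.card_singleton] at h2
    omega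
  obtain ⟨i, hiK, hi⟩ := Finset.not_subset.mp hsub
  have h1 : (∑ j ∈ K, single j 1 : Fin 5 →₀ ℕ) i = 1 := by
    rw [Finsupp.finset_sum_apply]
    simp only [Finsupp.single_apply]
    rw [Finset.sum_ite_eq' K i (fun _ => 1)]
    simp [hiK]
  have h2 : (single a x + single b y : Fin 5 →₀ ℕ) i = 0 := by
    simp only [Finset.mem_insert, Finset.mem_singleton, not_or] at hi
    simp [Finsupp.single_apply, Ne.symm hi.1, Ne.symm hi.2, Finsupp.add_apply]
  have := hle i
  omega

lemma lam17_X5 (q : MvPolynomial (Fin 5) ℂ) (i : Fin 5) : lam17 (q * X i ^ 5) = 0 := by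
  fin_cases i <;>
  simp [lam17, X_pow_eq_monomial, coeff_mul_monomial', Finsupp.single_le_iff,
    Finsupp.single_apply, Finsupp.add_apply]

set_option maxHeartbeats 2000000 in
lemma lam17_pow (q : MvPolynomial (Fin 5) ℂ) (j : ℕ) (h1 : 1 ≤ j) (h2 : j ≤ 5) :
    lam17 (q * ∑ i : Fin 5, X i ^ (2*j)) = 0 := by
  interval_cases j <;>
  · simp only [Fin.sum_univ_five, mul_add, lam17, X_pow_eq_monomial, coeff_mul_monomial',
      coeff_add]
    norm_num (config := { decide := true }) [Finsupp.single_le_iff, Finsupp.single_apply,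
      Finsupp.add_apply, ← Finsupp.single_tsub]
    try ring_nf

lemma lam17_prod (q : MvPolynomial (Fin 5) ℂ) (K : Finset (Fin 5)) (hK : K.card = 3) :
    lam17 (q * ∏ i ∈ K, X i) = 0 := by
  have h0 : ∀ a : Fin 5, ¬ (∑ i ∈ K, single i 1 : Fin 5 →₀ ℕ) ≤ single a 4 := by
    intro a
    have := notle17 K hK a a 4 0
    rwa [Finsupp.single_zero, add_zero] at this
  simp only [lam17, prodX17, coeff_mul_monomial']
  rw [if_neg (h0 0), if_neg (h0 1), if_neg (h0 2), if_neg (h0 3),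
    if_neg (notle17 K hK 0 1 2 2), if_neg (notle17 K hK 2 3 2 2)]
  ring

/-- The ideal of polynomials all of whose multiples are killed by `lam17`. -/
def J17 : Ideal (MvPolynomial (Fin 5) ℂ) where
  carrier := {p | ∀ q, lam17 (q * p) = 0}
  add_mem' := by
    intro a b ha hb q
    have : q * (a + b) = q * a + q * b := by ring
    rw [this]
    simp only [lam17, coeff_add] at *
    have h1 := ha q
    have h2 := hb q
    ring_nf at h1 h2 ⊢
    linear_combination h1 + h2
  zero_mem' := by
    intro q
    simp [lam17]
  smul_mem' := by
    intro c p hp q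
    have : q * (c • p) = (q * c) * p := by
      simp [smul_eq_mul]; ring
    rw [this]
    exact hp (q * c)

/-- `y₁² y₂²` is nonzero in `ℂ[y₁,…,y₅]/I`, where `I` is generated by
`y_i⁵`, the power sums `∑ y_i^{2j}` for `1 ≤ j ≤ 5`, and the products `y_i y_j y_k`. -/
theorem stmt17 (I : Ideal (MvPolynomial (Fin 5) ℂ))
    (hI : I = Ideal.span ({ q | ∃ i : Fin 5, q = X i ^ 5 } ∪
      { q | ∃ j : ℕ, 1 ≤ j ∧ j ≤ 5 ∧ q = ∑ i : Fin 5, X i ^ (2 * j) } ∪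
      { q | ∃ K : Finset (Fin 5), K.card = 3 ∧ q = ∏ i ∈ K, X i })) :
    (X 0 : MvPolynomial (Fin 5) ℂ) ^ 2 * X 1 ^ 2 ∉ I := by
  intro hmem
  have hIJ : I ≤ J17 := by
    rw [hI, Ideal.span_le]
    rintro p ((⟨i, rfl⟩ | ⟨j, hj1, hj2, rfl⟩) | ⟨K, hK, rfl⟩)
    · exact fun q => lam17_X5 q i
    · exact fun q => lam17_pow q j hj1 hj2
    · exact fun q => lam17_prod q K hK
  have h1 : lam17 (1 * ((X 0 : MvPolynomial (Fin 5) ℂ) ^ 2 * X 1 ^ 2)) = 0 := hIJ hmem 1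
  rw [one_mul] at h1
  have h2 : (X 0 : MvPolynomial (Fin 5) ℂ) ^ 2 * X 1 ^ 2
      = monomial (single 0 2 + single 1 2) 1 := by
    rw [X_pow_eq_monomial, X_pow_eq_monomial, monomial_mul, one_mul]
  rw [h2] at h1
  have ne1 : ((single 0 2 + single 1 2 : Fin 5 →₀ ℕ)) ≠ single 0 4 := by
    intro hh; have := DFunLike.congr_fun hh 1
    simp [Finsupp.single_apply, Finsupp.add_apply] at this
  have ne2 : ((single 0 2 + single 1 2 : Fin 5 →₀ ℕ)) ≠ single 1 4 := by
    intro hh; have := DFunLike.congr_fun hh 0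
    simp [Finsupp.single_apply, Finsupp.add_apply] at this
  have ne3 : ((single 0 2 + single 1 2 : Fin 5 →₀ ℕ)) ≠ single 2 4 := by
    intro hh; have := DFunLike.congr_fun hh 0
    simp [Finsupp.single_apply, Finsupp.add_apply] at this
  have ne4 : ((single 0 2 + single 1 2 : Fin 5 →₀ ℕ)) ≠ single 3 4 := by
    intro hh; have := DFunLike.congr_fun hh 0
    simp [Finsupp.single_apply, Finsupp.add_apply] at this
  have ne6 : ((single 0 2 + single 1 2 : Fin 5 →₀ ℕ)) ≠ single 2 2 + single 3 2 := by
    intro hh; have := DFunLike.congr_fun hh 0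
    simp [Finsupp.single_apply, Finsupp.add_apply] at this
  simp only [lam17, coeff_monomial, if_neg ne1, if_neg ne2, if_neg ne3, if_neg ne4,
    if_neg ne6, if_pos rfl] at h1
  norm_num at h1
end
end

section
/- Let $n\geq 3$ and consider the quotient ring $R=\mathbb{C}[y_1,y_2,y_3]/(y_1^2+y_2^2+y_3^2,\ y_1 y_2 y_3,\ y_1^3,\ y_2^3,\ y_3^3)$ (the case $n=3$, $a=1$, $k=1$, $b_1=2$). Then $\dim_\mathbb{C} R = 12$, and the successive quotients of the filtration $F_r=(y_3^r)R$ for $r=0,1,2$ have dimensions $5$, $4$, and $3$ respectively. -/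
open MvPolynomial

noncomputable section

namespace Stmt19Aux

abbrev K3 : Type := MvPolynomial (Fin 3) ℂ

def dd (a b c : ℕ) : Fin 3 →₀ ℕ := Finsupp.single 0 a + Finsupp.single 1 b + Finsupp.single 2 c

lemma dd_apply0 (a b c : ℕ) : dd a b c 0 = a := by simp [dd, Finsupp.single_apply]
lemma dd_apply1 (a b c : ℕ) : dd a b c 1 = b := by simp [dd, Finsupp.single_apply]
lemma dd_apply2 (a b c : ℕ) : dd a b c 2 = c := by simp [dd, Finsupp.single_apply]

@[simp] lemma dd_le {a b c a' b' c' : ℕ} : dd a b c ≤ dd a' b' c' ↔ a ≤ a' ∧ b ≤ b' ∧ c ≤ c' := by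
  constructor
  · intro h
    rw [Finsupp.le_def] at h
    exact ⟨by simpa [dd_apply0] using h 0, by simpa [dd_apply1] using h 1,
      by simpa [dd_apply2] using h 2⟩
  · rintro ⟨h0, h1, h2⟩
    rw [Finsupp.le_def]
    intro i
    fin_cases i <;> simp [dd_apply0, dd_apply1, dd_apply2, *]

@[simp] lemma dd_sub (a b c a' b' c' : ℕ) :
    dd a b c - dd a' b' c' = dd (a - a') (b - b') (c - c') := by
  ext i
  fin_cases i <;> simp [Finsupp.tsub_apply, dd_apply0, dd_apply1, dd_apply2]

@[simp] lemma dd_add (a b c a' b' c' : ℕ) :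
    dd a b c + dd a' b' c' = dd (a + a') (b + b') (c + c') := by
  ext i
  fin_cases i <;> simp [Finsupp.add_apply, dd_apply0, dd_apply1, dd_apply2]

@[simp] lemma dd_eq {a b c a' b' c' : ℕ} : dd a b c = dd a' b' c' ↔ a = a' ∧ b = b' ∧ c = c' := by
  constructor
  · intro h
    exact ⟨by rw [← dd_apply0 a b c, h, dd_apply0], by rw [← dd_apply1 a b c, h, dd_apply1],
      by rw [← dd_apply2 a b c, h, dd_apply2]⟩
  · rintro ⟨rfl, rfl, rfl⟩; rfl

lemma dd_self (s : Fin 3 →₀ ℕ) : dd (s 0) (s 1) (s 2) = s := by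
  ext i
  fin_cases i <;> simp [dd_apply0, dd_apply1, dd_apply2]

lemma X_prod (a b c : ℕ) : (X 0 ^ a * X 1 ^ b * X 2 ^ c : K3) = monomial (dd a b c) 1 := by
  rw [X_pow_eq_monomial, X_pow_eq_monomial, X_pow_eq_monomial, monomial_mul, monomial_mul]
  simp [dd]

lemma hg1 : (X 0 ^ 2 + X 1 ^ 2 + X 2 ^ 2 : K3)
    = monomial (dd 2 0 0) 1 + monomial (dd 0 2 0) 1 + monomial (dd 0 0 2) 1 := by
  rw [← X_prod 2 0 0, ← X_prod 0 2 0, ← X_prod 0 0 2]; ring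

lemma hg2 : (X 0 * X 1 * X 2 : K3) = monomial (dd 1 1 1) 1 := by
  rw [← X_prod 1 1 1]; ring

lemma hg3 : (X 0 ^ 3 : K3) = monomial (dd 3 0 0) 1 := by rw [← X_prod 3 0 0]; ring
lemma hg4 : (X 1 ^ 3 : K3) = monomial (dd 0 3 0) 1 := by rw [← X_prod 0 3 0]; ring
lemma hg5 : (X 2 ^ 3 : K3) = monomial (dd 0 0 3) 1 := by rw [← X_prod 0 0 3]; ring

/-- the generating set of the ideal -/
abbrev GS : Set K3 := {X 0 ^ 2 + X 1 ^ 2 + X 2 ^ 2, X 0 * X 1 * X 2,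
    X 0 ^ 3, X 1 ^ 3, (X 2 : K3) ^ 3}

lemma mem_coeff {q : K3} (hq : q ∈ Ideal.span GS) :
    coeff (dd 0 0 0) q = 0 ∧ coeff (dd 1 0 0) q = 0 ∧ coeff (dd 0 1 0) q = 0 ∧
    coeff (dd 0 0 1) q = 0 ∧ coeff (dd 1 1 0) q = 0 ∧ coeff (dd 1 0 1) q = 0 ∧
    coeff (dd 0 1 1) q = 0 ∧
    coeff (dd 0 2 0) q = coeff (dd 2 0 0) q ∧ coeff (dd 0 0 2) q = coeff (dd 2 0 0) q ∧
    coeff (dd 1 0 2) q = coeff (dd 1 2 0) q ∧ coeff (dd 0 1 2) q = coeff (dd 2 1 0) q ∧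
    coeff (dd 0 2 1) q = coeff (dd 2 0 1) q := by
  rw [GS, Ideal.mem_span_insert] at hq
  obtain ⟨a1, z1, hz1, rfl⟩ := hq
  rw [Ideal.mem_span_insert] at hz1
  obtain ⟨a2, z2, hz2, rfl⟩ := hz1
  rw [Ideal.mem_span_insert] at hz2
  obtain ⟨a3, z3, hz3, rfl⟩ := hz2
  rw [Ideal.mem_span_insert] at hz3
  obtain ⟨a4, z4, hz4, rfl⟩ := hz3
  rw [Ideal.mem_span_singleton'] at hz4
  obtain ⟨a5, rfl⟩ := hz4
  refine ⟨?_, ?_, ?_, ?_, ?_, ?_, ?_, ?_, ?_, ?_, ?_, ?_⟩ <;>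
    simp [hg1, hg2, hg3, hg4, hg5, mul_add, coeff_add, coeff_mul_monomial']

variable (I : Ideal K3)

def mono12 : Fin 12 → (Fin 3 →₀ ℕ) :=
  ![dd 0 0 0, dd 1 0 0, dd 0 1 0, dd 0 0 1, dd 1 1 0, dd 1 0 1, dd 0 1 1,
    dd 0 2 0, dd 0 0 2, dd 1 0 2, dd 0 1 2, dd 0 2 1]

def VV : Fin 12 → (K3 ⧸ I) := fun j => Ideal.Quotient.mk I (monomial (mono12 j) 1)

variable {I}

set_option maxHeartbeats 1600000 in
lemma indep_VV (hI : I = Ideal.span GS) : LinearIndependent ℂ (VV I) := by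
  rw [Fintype.linearIndependent_iff]
  intro g hg
  have key : (∑ j : Fin 12, g j • VV I j)
      = Ideal.Quotient.mkₐ ℂ I (∑ j : Fin 12, g j • monomial (mono12 j) 1) := by
    rw [map_sum]
    refine Finset.sum_congr rfl fun j _ => ?_
    rw [map_smul, Ideal.Quotient.mkₐ_eq_mk]
    rfl
  set q : K3 := ∑ j : Fin 12, g j • monomial (mono12 j) 1 with hq
  have hqI : q ∈ Ideal.span GS := by
    rw [← hI, ← Ideal.Quotient.eq_zero_iff_mem]
    rw [← Ideal.Quotient.mkₐ_eq_mk ℂ I, ← key, hg]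
  obtain ⟨h0, h1, h2, h3, h4, h5, h6, h7, h8, h9, h10, h11⟩ := mem_coeff hqI
  have c0 : coeff (dd 0 0 0) q = g 0 := by
    simp [hq, coeff_sum, coeff_smul, coeff_monomial, mono12, Fin.sum_univ_succ]
  have c1 : coeff (dd 1 0 0) q = g 1 := by
    simp [hq, coeff_sum, coeff_smul, coeff_monomial, mono12, Fin.sum_univ_succ]
    try rfl
  have c2 : coeff (dd 0 1 0) q = g 2 := by
    simp [hq, coeff_sum, coeff_smul, coeff_monomial, mono12, Fin.sum_univ_succ]
    try rfl
  have c3 : coeff (dd 0 0 1) q = g 3 := by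
    simp [hq, coeff_sum, coeff_smul, coeff_monomial, mono12, Fin.sum_univ_succ]
    try rfl
  have c4 : coeff (dd 1 1 0) q = g 4 := by
    simp [hq, coeff_sum, coeff_smul, coeff_monomial, mono12, Fin.sum_univ_succ]
    try rfl
  have c5 : coeff (dd 1 0 1) q = g 5 := by
    simp [hq, coeff_sum, coeff_smul, coeff_monomial, mono12, Fin.sum_univ_succ]
    try rfl
  have c6 : coeff (dd 0 1 1) q = g 6 := by
    simp [hq, coeff_sum, coeff_smul, coeff_monomial, mono12, Fin.sum_univ_succ]
    try rfl
  have c7 : coeff (dd 0 2 0) q = g 7 := by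
    simp [hq, coeff_sum, coeff_smul, coeff_monomial, mono12, Fin.sum_univ_succ]
    try rfl
  have c8 : coeff (dd 0 0 2) q = g 8 := by
    simp [hq, coeff_sum, coeff_smul, coeff_monomial, mono12, Fin.sum_univ_succ]
    try rfl
  have c9 : coeff (dd 1 0 2) q = g 9 := by
    simp [hq, coeff_sum, coeff_smul, coeff_monomial, mono12, Fin.sum_univ_succ]
    try rfl
  have c10 : coeff (dd 0 1 2) q = g 10 := by
    simp [hq, coeff_sum, coeff_smul, coeff_monomial, mono12, Fin.sum_univ_succ]
    try rfl
  have c11 : coeff (dd 0 2 1) q = g 11 := by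
    simp [hq, coeff_sum, coeff_smul, coeff_monomial, mono12, Fin.sum_univ_succ]
    try rfl
  have z200 : coeff (dd 2 0 0) q = 0 := by
    simp [hq, coeff_sum, coeff_smul, coeff_monomial, mono12, Fin.sum_univ_succ]
  have z120 : coeff (dd 1 2 0) q = 0 := by
    simp [hq, coeff_sum, coeff_smul, coeff_monomial, mono12, Fin.sum_univ_succ]
  have z210 : coeff (dd 2 1 0) q = 0 := by
    simp [hq, coeff_sum, coeff_smul, coeff_monomial, mono12, Fin.sum_univ_succ]
  have z201 : coeff (dd 2 0 1) q = 0 := by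
    simp [hq, coeff_sum, coeff_smul, coeff_monomial, mono12, Fin.sum_univ_succ]
  intro j
  fin_cases j
  · exact c0.symm.trans h0
  · exact c1.symm.trans h1
  · exact c2.symm.trans h2
  · exact c3.symm.trans h3
  · exact c4.symm.trans h4
  · exact c5.symm.trans h5
  · exact c6.symm.trans h6
  · exact c7.symm.trans (h7.trans z200)
  · exact c8.symm.trans (h8.trans z200)
  · exact c9.symm.trans (h9.trans z120)
  · exact c10.symm.trans (h10.trans z210)
  · exact c11.symm.trans (h11.trans z201)

lemma pow_split (x : K3) {n k : ℕ} (h : k ≤ n) : x ^ n = x ^ k * x ^ (n - k) := by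
  rw [← pow_add]; congr 1; omega

lemma g1_mem (hI : I = Ideal.span GS) : (X 0 ^ 2 + X 1 ^ 2 + X 2 ^ 2 : K3) ∈ I := by
  rw [hI]; exact Ideal.subset_span (by simp [GS])
lemma g2_mem (hI : I = Ideal.span GS) : (X 0 * X 1 * X 2 : K3) ∈ I := by
  rw [hI]; exact Ideal.subset_span (by simp [GS])
lemma g3_mem (hI : I = Ideal.span GS) : (X 0 ^ 3 : K3) ∈ I := by
  rw [hI]; exact Ideal.subset_span (by simp [GS])
lemma g4_mem (hI : I = Ideal.span GS) : (X 1 ^ 3 : K3) ∈ I := by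
  rw [hI]; exact Ideal.subset_span (by simp [GS])
lemma g5_mem (hI : I = Ideal.span GS) : (X 2 ^ 3 : K3) ∈ I := by
  rw [hI]; exact Ideal.subset_span (by simp [GS])

lemma m220_mem (hI : I = Ideal.span GS) : (monomial (dd 2 2 0) (1:ℂ) : K3) ∈ I := by
  have h2 : (2:ℂ) • (monomial (dd 2 2 0) (1:ℂ) : K3)
      = (X 0 ^ 2 + X 1 ^ 2 - X 2 ^ 2) * (X 0 ^ 2 + X 1 ^ 2 + X 2 ^ 2)
        - X 0 * X 0 ^ 3 - X 1 * X 1 ^ 3 + X 2 * X 2 ^ 3 := by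
    rw [← X_prod 2 2 0, smul_eq_C_mul]
    have : (C (2:ℂ) : K3) = 2 := map_ofNat C 2
    rw [this]; ring
  have hmem : (2:ℂ) • (monomial (dd 2 2 0) (1:ℂ) : K3) ∈ I := by
    rw [h2]
    exact add_mem (sub_mem (sub_mem (Ideal.mul_mem_left _ _ (g1_mem hI))
      (Ideal.mul_mem_left _ _ (g3_mem hI))) (Ideal.mul_mem_left _ _ (g4_mem hI)))
      (Ideal.mul_mem_left _ _ (g5_mem hI))
  have : (monomial (dd 2 2 0) (1:ℂ) : K3) = ((2:ℂ)⁻¹) • ((2:ℂ) • (monomial (dd 2 2 0) (1:ℂ) : K3)) := by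
    rw [smul_smul]; norm_num
  rw [this]
  exact Submodule.smul_of_tower_mem _ _ hmem

lemma m202_mem (hI : I = Ideal.span GS) : (monomial (dd 2 0 2) (1:ℂ) : K3) ∈ I := by
  have h2 : (2:ℂ) • (monomial (dd 2 0 2) (1:ℂ) : K3)
      = (X 0 ^ 2 - X 1 ^ 2 + X 2 ^ 2) * (X 0 ^ 2 + X 1 ^ 2 + X 2 ^ 2)
        - X 0 * X 0 ^ 3 + X 1 * X 1 ^ 3 - X 2 * X 2 ^ 3 := by
    rw [← X_prod 2 0 2, smul_eq_C_mul]
    have : (C (2:ℂ) : K3) = 2 := map_ofNat C 2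
    rw [this]; ring
  have hmem : (2:ℂ) • (monomial (dd 2 0 2) (1:ℂ) : K3) ∈ I := by
    rw [h2]
    exact sub_mem (add_mem (sub_mem (Ideal.mul_mem_left _ _ (g1_mem hI))
      (Ideal.mul_mem_left _ _ (g3_mem hI))) (Ideal.mul_mem_left _ _ (g4_mem hI)))
      (Ideal.mul_mem_left _ _ (g5_mem hI))
  have : (monomial (dd 2 0 2) (1:ℂ) : K3) = ((2:ℂ)⁻¹) • ((2:ℂ) • (monomial (dd 2 0 2) (1:ℂ) : K3)) := by
    rw [smul_smul]; norm_num
  rw [this]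
  exact Submodule.smul_of_tower_mem _ _ hmem

lemma m022_mem (hI : I = Ideal.span GS) : (monomial (dd 0 2 2) (1:ℂ) : K3) ∈ I := by
  have h2 : (2:ℂ) • (monomial (dd 0 2 2) (1:ℂ) : K3)
      = (- X 0 ^ 2 + X 1 ^ 2 + X 2 ^ 2) * (X 0 ^ 2 + X 1 ^ 2 + X 2 ^ 2)
        + X 0 * X 0 ^ 3 - X 1 * X 1 ^ 3 - X 2 * X 2 ^ 3 := by
    rw [← X_prod 0 2 2, smul_eq_C_mul]
    have : (C (2:ℂ) : K3) = 2 := map_ofNat C 2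
    rw [this]; ring
  have hmem : (2:ℂ) • (monomial (dd 0 2 2) (1:ℂ) : K3) ∈ I := by
    rw [h2]
    exact sub_mem (sub_mem (add_mem (Ideal.mul_mem_left _ _ (g1_mem hI))
      (Ideal.mul_mem_left _ _ (g3_mem hI))) (Ideal.mul_mem_left _ _ (g4_mem hI)))
      (Ideal.mul_mem_left _ _ (g5_mem hI))
  have : (monomial (dd 0 2 2) (1:ℂ) : K3) = ((2:ℂ)⁻¹) • ((2:ℂ) • (monomial (dd 0 2 2) (1:ℂ) : K3)) := by
    rw [smul_smul]; norm_num
  rw [this]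
  exact Submodule.smul_of_tower_mem _ _ hmem

/-- all the monomial classes that vanish -/
lemma mk_dd_zero (hI : I = Ideal.span GS) {a b c : ℕ}
    (h : 3 ≤ a ∨ 3 ≤ b ∨ 3 ≤ c ∨ (1 ≤ a ∧ 1 ≤ b ∧ 1 ≤ c) ∨ (2 ≤ a ∧ 2 ≤ b) ∨
      (2 ≤ a ∧ 2 ≤ c) ∨ (2 ≤ b ∧ 2 ≤ c)) :
    Ideal.Quotient.mk I (monomial (dd a b c) 1) = 0 := by
  rw [Ideal.Quotient.eq_zero_iff_mem]
  rcases h with h | h | h | ⟨h1, h2, h3⟩ | ⟨h1, h2⟩ | ⟨h1, h2⟩ | ⟨h1, h2⟩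
  · have e : (monomial (dd a b c) (1:ℂ) : K3) = X 0 ^ 3 * (X 0 ^ (a-3) * X 1 ^ b * X 2 ^ c) := by
      rw [← X_prod, pow_split (X 0) h]; ring
    rw [e]; exact Ideal.mul_mem_right _ _ (g3_mem hI)
  · have e : (monomial (dd a b c) (1:ℂ) : K3) = X 1 ^ 3 * (X 0 ^ a * X 1 ^ (b-3) * X 2 ^ c) := by
      rw [← X_prod, pow_split (X 1) h]; ring
    rw [e]; exact Ideal.mul_mem_right _ _ (g4_mem hI)
  · have e : (monomial (dd a b c) (1:ℂ) : K3) = X 2 ^ 3 * (X 0 ^ a * X 1 ^ b * X 2 ^ (c-3)) := by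
      rw [← X_prod, pow_split (X 2) h]; ring
    rw [e]; exact Ideal.mul_mem_right _ _ (g5_mem hI)
  · have e : (monomial (dd a b c) (1:ℂ) : K3)
        = (X 0 * X 1 * X 2) * (X 0 ^ (a-1) * X 1 ^ (b-1) * X 2 ^ (c-1)) := by
      rw [← X_prod, pow_split (X 0) h1, pow_split (X 1) h2, pow_split (X 2) h3]; ring
    rw [e]; exact Ideal.mul_mem_right _ _ (g2_mem hI)
  · have e : (monomial (dd a b c) (1:ℂ) : K3)
        = (monomial (dd 2 2 0) 1) * (X 0 ^ (a-2) * X 1 ^ (b-2) * X 2 ^ c) := by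
      rw [← X_prod, ← X_prod 2 2 0, pow_split (X 0) h1, pow_split (X 1) h2]; ring
    rw [e]; exact Ideal.mul_mem_right _ _ (m220_mem hI)
  · have e : (monomial (dd a b c) (1:ℂ) : K3)
        = (monomial (dd 2 0 2) 1) * (X 0 ^ (a-2) * X 1 ^ b * X 2 ^ (c-2)) := by
      rw [← X_prod, ← X_prod 2 0 2, pow_split (X 0) h1, pow_split (X 2) h2]; ring
    rw [e]; exact Ideal.mul_mem_right _ _ (m202_mem hI)
  · have e : (monomial (dd a b c) (1:ℂ) : K3)
        = (monomial (dd 0 2 2) 1) * (X 0 ^ a * X 1 ^ (b-2) * X 2 ^ (c-2)) := by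
      rw [← X_prod, ← X_prod 0 2 2, pow_split (X 1) h1, pow_split (X 2) h2]; ring
    rw [e]; exact Ideal.mul_mem_right _ _ (m022_mem hI)

lemma mono_mem' (hI : I = Ideal.span GS) (a b c : ℕ) :
    Ideal.Quotient.mk I (monomial (dd a b c) 1) ∈ Submodule.span ℂ (Set.range (VV I)) := by
  have hV : ∀ j : Fin 12, Ideal.Quotient.mk I (monomial (mono12 j) 1)
      ∈ Submodule.span ℂ (Set.range (VV I)) := fun j => Submodule.subset_span ⟨j, rfl⟩
  by_cases ha : 3 ≤ a
  · rw [mk_dd_zero hI (by omega)]; exact zero_mem _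
  by_cases hb : 3 ≤ b
  · rw [mk_dd_zero hI (by omega)]; exact zero_mem _
  by_cases hc : 3 ≤ c
  · rw [mk_dd_zero hI (by omega)]; exact zero_mem _
  have ha' : a < 3 := by omega
  have hb' : b < 3 := by omega
  have hc' : c < 3 := by omega
  interval_cases a <;> interval_cases b <;> interval_cases c
  · exact hV 0
  · exact hV 3
  · exact hV 8
  · exact hV 2
  · exact hV 6
  · exact hV 10
  · exact hV 7
  · exact hV 11
  · rw [mk_dd_zero hI (by omega)]; exact zero_mem _
  · exact hV 1
  · exact hV 5
  · exact hV 9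
  · exact hV 4
  · rw [mk_dd_zero hI (by omega)]; exact zero_mem _
  · rw [mk_dd_zero hI (by omega)]; exact zero_mem _
  · -- (1,2,0) : xy² ≡ -xz²
    have hcert : (monomial (dd 1 2 0) (1:ℂ) : K3) - (-(monomial (dd 1 0 2) 1)) ∈ I := by
      have e : (monomial (dd 1 2 0) (1:ℂ) : K3) - (-(monomial (dd 1 0 2) 1))
          = X 0 * (X 0 ^ 2 + X 1 ^ 2 + X 2 ^ 2) - X 0 ^ 3 := by
        rw [← X_prod 1 2 0, ← X_prod 1 0 2]; ring
      rw [e]; exact sub_mem (Ideal.mul_mem_left _ _ (g1_mem hI)) (g3_mem hI)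
    rw [Ideal.Quotient.eq.mpr hcert, map_neg]
    exact neg_mem (hV 9)
  · rw [mk_dd_zero hI (by omega)]; exact zero_mem _
  · rw [mk_dd_zero hI (by omega)]; exact zero_mem _
  · -- (2,0,0) : x² ≡ -y² - z²
    have hcert : (monomial (dd 2 0 0) (1:ℂ) : K3)
        - (-(monomial (dd 0 2 0) 1) - monomial (dd 0 0 2) 1) ∈ I := by
      have e : (monomial (dd 2 0 0) (1:ℂ) : K3)
          - (-(monomial (dd 0 2 0) 1) - monomial (dd 0 0 2) 1)
          = X 0 ^ 2 + X 1 ^ 2 + X 2 ^ 2 := by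
        rw [← X_prod 2 0 0, ← X_prod 0 2 0, ← X_prod 0 0 2]; ring
      rw [e]; exact g1_mem hI
    rw [Ideal.Quotient.eq.mpr hcert, map_sub, map_neg]
    exact sub_mem (neg_mem (hV 7)) (hV 8)
  · -- (2,0,1) : x²z ≡ -y²z
    have hcert : (monomial (dd 2 0 1) (1:ℂ) : K3) - (-(monomial (dd 0 2 1) 1)) ∈ I := by
      have e : (monomial (dd 2 0 1) (1:ℂ) : K3) - (-(monomial (dd 0 2 1) 1))
          = X 2 * (X 0 ^ 2 + X 1 ^ 2 + X 2 ^ 2) - X 2 ^ 3 := by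
        rw [← X_prod 2 0 1, ← X_prod 0 2 1]; ring
      rw [e]; exact sub_mem (Ideal.mul_mem_left _ _ (g1_mem hI)) (g5_mem hI)
    rw [Ideal.Quotient.eq.mpr hcert, map_neg]
    exact neg_mem (hV 11)
  · rw [mk_dd_zero hI (by omega)]; exact zero_mem _
  · -- (2,1,0) : x²y ≡ -yz²
    have hcert : (monomial (dd 2 1 0) (1:ℂ) : K3) - (-(monomial (dd 0 1 2) 1)) ∈ I := by
      have e : (monomial (dd 2 1 0) (1:ℂ) : K3) - (-(monomial (dd 0 1 2) 1))
          = X 1 * (X 0 ^ 2 + X 1 ^ 2 + X 2 ^ 2) - X 1 ^ 3 := by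
        rw [← X_prod 2 1 0, ← X_prod 0 1 2]; ring
      rw [e]; exact sub_mem (Ideal.mul_mem_left _ _ (g1_mem hI)) (g4_mem hI)
    rw [Ideal.Quotient.eq.mpr hcert, map_neg]
    exact neg_mem (hV 10)
  · rw [mk_dd_zero hI (by omega)]; exact zero_mem _
  · rw [mk_dd_zero hI (by omega)]; exact zero_mem _
  · rw [mk_dd_zero hI (by omega)]; exact zero_mem _
  · rw [mk_dd_zero hI (by omega)]; exact zero_mem _
  · rw [mk_dd_zero hI (by omega)]; exact zero_mem _

lemma span_VV (hI : I = Ideal.span GS) : Submodule.span ℂ (Set.range (VV I)) = ⊤ := by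
  rw [eq_top_iff]
  rintro r -
  obtain ⟨p, rfl⟩ := Ideal.Quotient.mk_surjective r
  rw [show p = ∑ v ∈ p.support, monomial v (coeff v p) from as_sum p, map_sum]
  apply Submodule.sum_mem
  intro s _
  have e : (monomial s (coeff s p) : K3) = (coeff s p) • monomial s 1 := by
    rw [smul_monomial, smul_eq_mul, mul_one]
  rw [e, ← Ideal.Quotient.mkₐ_eq_mk ℂ I, map_smul, Ideal.Quotient.mkₐ_eq_mk ℂ I]
  apply Submodule.smul_mem
  rw [← dd_self s]
  exact mono_mem' hI _ _ _

lemma hX2m : (X 2 : K3) = monomial (dd 0 0 1) 1 := by rw [← X_prod 0 0 1]; ring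
lemma hX2m2 : (X 2 ^ 2 : K3) = monomial (dd 0 0 2) 1 := by rw [← X_prod 0 0 2]; ring

lemma hmul (a b c : ℕ) :
    Ideal.Quotient.mk I (monomial (dd a b c) 1) * Ideal.Quotient.mk I (X 2)
      = Ideal.Quotient.mk I (monomial (dd a b (c+1)) 1) := by
  rw [← map_mul, hX2m, monomial_mul, dd_add, mul_one]
  norm_num

lemma hmul2 (a b c : ℕ) :
    Ideal.Quotient.mk I (monomial (dd a b c) 1) * Ideal.Quotient.mk I (X 2) ^ 2
      = Ideal.Quotient.mk I (monomial (dd a b (c+2)) 1) := by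
  rw [← map_pow, ← map_mul, hX2m2, monomial_mul, dd_add, mul_one]
  norm_num

def emb7 : Fin 7 → Fin 12 := ![3, 5, 6, 8, 9, 10, 11]
def emb3 : Fin 3 → Fin 12 := ![8, 9, 10]

lemma F1_eq (hI : I = Ideal.span GS) :
    (Ideal.span {Ideal.Quotient.mk I (X 2)}).restrictScalars ℂ
      = Submodule.span ℂ (Set.range (VV I ∘ emb7)) := by
  apply le_antisymm
  · intro u hu
    rw [Submodule.restrictScalars_mem, Ideal.mem_span_singleton'] at hu
    obtain ⟨r, rfl⟩ := hu
    have hr : r ∈ Submodule.span ℂ (Set.range (VV I)) := by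
      rw [span_VV hI]; exact Submodule.mem_top
    induction hr using Submodule.span_induction with
    | mem x hx =>
        obtain ⟨j, rfl⟩ := hx
        fin_cases j
        · show VV I 0 * Ideal.Quotient.mk I (X 2) ∈ Submodule.span ℂ (Set.range (VV I ∘ emb7))
          rw [show VV I 0 * Ideal.Quotient.mk I (X 2)
            = Ideal.Quotient.mk I (monomial (dd 0 0 1) 1) from hmul 0 0 0]
          exact Submodule.subset_span ⟨0, rfl⟩
        · show VV I 1 * Ideal.Quotient.mk I (X 2) ∈ Submodule.span ℂ (Set.range (VV I ∘ emb7))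
          rw [show VV I 1 * Ideal.Quotient.mk I (X 2)
            = Ideal.Quotient.mk I (monomial (dd 1 0 1) 1) from hmul 1 0 0]
          exact Submodule.subset_span ⟨1, rfl⟩
        · show VV I 2 * Ideal.Quotient.mk I (X 2) ∈ Submodule.span ℂ (Set.range (VV I ∘ emb7))
          rw [show VV I 2 * Ideal.Quotient.mk I (X 2)
            = Ideal.Quotient.mk I (monomial (dd 0 1 1) 1) from hmul 0 1 0]
          exact Submodule.subset_span ⟨2, rfl⟩
        · show VV I 3 * Ideal.Quotient.mk I (X 2) ∈ Submodule.span ℂ (Set.range (VV I ∘ emb7))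
          rw [show VV I 3 * Ideal.Quotient.mk I (X 2)
            = Ideal.Quotient.mk I (monomial (dd 0 0 2) 1) from hmul 0 0 1]
          exact Submodule.subset_span ⟨3, rfl⟩
        · show VV I 4 * Ideal.Quotient.mk I (X 2) ∈ Submodule.span ℂ (Set.range (VV I ∘ emb7))
          rw [show VV I 4 * Ideal.Quotient.mk I (X 2)
            = Ideal.Quotient.mk I (monomial (dd 1 1 1) 1) from hmul 1 1 0,
            mk_dd_zero hI (by omega)]
          exact zero_mem _
        · show VV I 5 * Ideal.Quotient.mk I (X 2) ∈ Submodule.span ℂ (Set.range (VV I ∘ emb7))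
          rw [show VV I 5 * Ideal.Quotient.mk I (X 2)
            = Ideal.Quotient.mk I (monomial (dd 1 0 2) 1) from hmul 1 0 1]
          exact Submodule.subset_span ⟨4, rfl⟩
        · show VV I 6 * Ideal.Quotient.mk I (X 2) ∈ Submodule.span ℂ (Set.range (VV I ∘ emb7))
          rw [show VV I 6 * Ideal.Quotient.mk I (X 2)
            = Ideal.Quotient.mk I (monomial (dd 0 1 2) 1) from hmul 0 1 1]
          exact Submodule.subset_span ⟨5, rfl⟩
        · show VV I 7 * Ideal.Quotient.mk I (X 2) ∈ Submodule.span ℂ (Set.range (VV I ∘ emb7))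
          rw [show VV I 7 * Ideal.Quotient.mk I (X 2)
            = Ideal.Quotient.mk I (monomial (dd 0 2 1) 1) from hmul 0 2 0]
          exact Submodule.subset_span ⟨6, rfl⟩
        · show VV I 8 * Ideal.Quotient.mk I (X 2) ∈ Submodule.span ℂ (Set.range (VV I ∘ emb7))
          rw [show VV I 8 * Ideal.Quotient.mk I (X 2)
            = Ideal.Quotient.mk I (monomial (dd 0 0 3) 1) from hmul 0 0 2,
            mk_dd_zero hI (by omega)]
          exact zero_mem _
        · show VV I 9 * Ideal.Quotient.mk I (X 2) ∈ Submodule.span ℂ (Set.range (VV I ∘ emb7))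
          rw [show VV I 9 * Ideal.Quotient.mk I (X 2)
            = Ideal.Quotient.mk I (monomial (dd 1 0 3) 1) from hmul 1 0 2,
            mk_dd_zero hI (by omega)]
          exact zero_mem _
        · show VV I 10 * Ideal.Quotient.mk I (X 2) ∈ Submodule.span ℂ (Set.range (VV I ∘ emb7))
          rw [show VV I 10 * Ideal.Quotient.mk I (X 2)
            = Ideal.Quotient.mk I (monomial (dd 0 1 3) 1) from hmul 0 1 2,
            mk_dd_zero hI (by omega)]
          exact zero_mem _
        · show VV I 11 * Ideal.Quotient.mk I (X 2) ∈ Submodule.span ℂ (Set.range (VV I ∘ emb7))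
          rw [show VV I 11 * Ideal.Quotient.mk I (X 2)
            = Ideal.Quotient.mk I (monomial (dd 0 2 2) 1) from hmul 0 2 1,
            mk_dd_zero hI (by omega)]
          exact zero_mem _
    | zero => rw [zero_mul]; exact zero_mem _
    | add x y hx hy ihx ihy => rw [add_mul]; exact add_mem ihx ihy
    | smul a x hx ih => rw [smul_mul_assoc]; exact Submodule.smul_mem _ _ ih
  · rw [Submodule.span_le]
    rintro _ ⟨k, rfl⟩
    rw [SetLike.mem_coe, Submodule.restrictScalars_mem, Ideal.mem_span_singleton']
    fin_cases k
    · exact ⟨Ideal.Quotient.mk I (monomial (dd 0 0 0) 1), hmul 0 0 0⟩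
    · exact ⟨Ideal.Quotient.mk I (monomial (dd 1 0 0) 1), hmul 1 0 0⟩
    · exact ⟨Ideal.Quotient.mk I (monomial (dd 0 1 0) 1), hmul 0 1 0⟩
    · exact ⟨Ideal.Quotient.mk I (monomial (dd 0 0 1) 1), hmul 0 0 1⟩
    · exact ⟨Ideal.Quotient.mk I (monomial (dd 1 0 1) 1), hmul 1 0 1⟩
    · exact ⟨Ideal.Quotient.mk I (monomial (dd 0 1 1) 1), hmul 0 1 1⟩
    · exact ⟨Ideal.Quotient.mk I (monomial (dd 0 2 0) 1), hmul 0 2 0⟩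

lemma F2_eq (hI : I = Ideal.span GS) :
    (Ideal.span {Ideal.Quotient.mk I (X 2) ^ 2}).restrictScalars ℂ
      = Submodule.span ℂ (Set.range (VV I ∘ emb3)) := by
  apply le_antisymm
  · intro u hu
    rw [Submodule.restrictScalars_mem, Ideal.mem_span_singleton'] at hu
    obtain ⟨r, rfl⟩ := hu
    have hr : r ∈ Submodule.span ℂ (Set.range (VV I)) := by
      rw [span_VV hI]; exact Submodule.mem_top
    induction hr using Submodule.span_induction with
    | mem x hx =>
        obtain ⟨j, rfl⟩ := hx
        fin_cases j
        · show VV I 0 * Ideal.Quotient.mk I (X 2) ^ 2 ∈ Submodule.span ℂ (Set.range (VV I ∘ emb3))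
          rw [show VV I 0 * Ideal.Quotient.mk I (X 2) ^ 2
            = Ideal.Quotient.mk I (monomial (dd 0 0 2) 1) from hmul2 0 0 0]
          exact Submodule.subset_span ⟨0, rfl⟩
        · show VV I 1 * Ideal.Quotient.mk I (X 2) ^ 2 ∈ Submodule.span ℂ (Set.range (VV I ∘ emb3))
          rw [show VV I 1 * Ideal.Quotient.mk I (X 2) ^ 2
            = Ideal.Quotient.mk I (monomial (dd 1 0 2) 1) from hmul2 1 0 0]
          exact Submodule.subset_span ⟨1, rfl⟩
        · show VV I 2 * Ideal.Quotient.mk I (X 2) ^ 2 ∈ Submodule.span ℂ (Set.range (VV I ∘ emb3))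
          rw [show VV I 2 * Ideal.Quotient.mk I (X 2) ^ 2
            = Ideal.Quotient.mk I (monomial (dd 0 1 2) 1) from hmul2 0 1 0]
          exact Submodule.subset_span ⟨2, rfl⟩
        · show VV I 3 * Ideal.Quotient.mk I (X 2) ^ 2 ∈ Submodule.span ℂ (Set.range (VV I ∘ emb3))
          rw [show VV I 3 * Ideal.Quotient.mk I (X 2) ^ 2
            = Ideal.Quotient.mk I (monomial (dd 0 0 3) 1) from hmul2 0 0 1,
            mk_dd_zero hI (by omega)]
          exact zero_mem _
        · show VV I 4 * Ideal.Quotient.mk I (X 2) ^ 2 ∈ Submodule.span ℂ (Set.range (VV I ∘ emb3))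
          rw [show VV I 4 * Ideal.Quotient.mk I (X 2) ^ 2
            = Ideal.Quotient.mk I (monomial (dd 1 1 2) 1) from hmul2 1 1 0,
            mk_dd_zero hI (by omega)]
          exact zero_mem _
        · show VV I 5 * Ideal.Quotient.mk I (X 2) ^ 2 ∈ Submodule.span ℂ (Set.range (VV I ∘ emb3))
          rw [show VV I 5 * Ideal.Quotient.mk I (X 2) ^ 2
            = Ideal.Quotient.mk I (monomial (dd 1 0 3) 1) from hmul2 1 0 1,
            mk_dd_zero hI (by omega)]
          exact zero_mem _
        · show VV I 6 * Ideal.Quotient.mk I (X 2) ^ 2 ∈ Submodule.span ℂ (Set.range (VV I ∘ emb3))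
          rw [show VV I 6 * Ideal.Quotient.mk I (X 2) ^ 2
            = Ideal.Quotient.mk I (monomial (dd 0 1 3) 1) from hmul2 0 1 1,
            mk_dd_zero hI (by omega)]
          exact zero_mem _
        · show VV I 7 * Ideal.Quotient.mk I (X 2) ^ 2 ∈ Submodule.span ℂ (Set.range (VV I ∘ emb3))
          rw [show VV I 7 * Ideal.Quotient.mk I (X 2) ^ 2
            = Ideal.Quotient.mk I (monomial (dd 0 2 2) 1) from hmul2 0 2 0,
            mk_dd_zero hI (by omega)]
          exact zero_mem _
        · show VV I 8 * Ideal.Quotient.mk I (X 2) ^ 2 ∈ Submodule.span ℂ (Set.range (VV I ∘ emb3))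
          rw [show VV I 8 * Ideal.Quotient.mk I (X 2) ^ 2
            = Ideal.Quotient.mk I (monomial (dd 0 0 4) 1) from hmul2 0 0 2,
            mk_dd_zero hI (by omega)]
          exact zero_mem _
        · show VV I 9 * Ideal.Quotient.mk I (X 2) ^ 2 ∈ Submodule.span ℂ (Set.range (VV I ∘ emb3))
          rw [show VV I 9 * Ideal.Quotient.mk I (X 2) ^ 2
            = Ideal.Quotient.mk I (monomial (dd 1 0 4) 1) from hmul2 1 0 2,
            mk_dd_zero hI (by omega)]
          exact zero_mem _
        · show VV I 10 * Ideal.Quotient.mk I (X 2) ^ 2 ∈ Submodule.span ℂ (Set.range (VV I ∘ emb3))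
          rw [show VV I 10 * Ideal.Quotient.mk I (X 2) ^ 2
            = Ideal.Quotient.mk I (monomial (dd 0 1 4) 1) from hmul2 0 1 2,
            mk_dd_zero hI (by omega)]
          exact zero_mem _
        · show VV I 11 * Ideal.Quotient.mk I (X 2) ^ 2 ∈ Submodule.span ℂ (Set.range (VV I ∘ emb3))
          rw [show VV I 11 * Ideal.Quotient.mk I (X 2) ^ 2
            = Ideal.Quotient.mk I (monomial (dd 0 2 3) 1) from hmul2 0 2 1,
            mk_dd_zero hI (by omega)]
          exact zero_mem _
    | zero => rw [zero_mul]; exact zero_mem _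
    | add x y hx hy ihx ihy => rw [add_mul]; exact add_mem ihx ihy
    | smul a x hx ih => rw [smul_mul_assoc]; exact Submodule.smul_mem _ _ ih
  · rw [Submodule.span_le]
    rintro _ ⟨k, rfl⟩
    rw [SetLike.mem_coe, Submodule.restrictScalars_mem, Ideal.mem_span_singleton']
    fin_cases k
    · exact ⟨Ideal.Quotient.mk I (monomial (dd 0 0 0) 1), hmul2 0 0 0⟩
    · exact ⟨Ideal.Quotient.mk I (monomial (dd 1 0 0) 1), hmul2 1 0 0⟩
    · exact ⟨Ideal.Quotient.mk I (monomial (dd 0 1 0) 1), hmul2 0 1 0⟩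

lemma F3_eq (hI : I = Ideal.span GS) :
    (Ideal.span {Ideal.Quotient.mk I (X 2) ^ 3} : Ideal (K3 ⧸ I)) = ⊥ := by
  rw [Ideal.span_singleton_eq_bot, ← map_pow, Ideal.Quotient.eq_zero_iff_mem]
  exact g5_mem hI

end Stmt19Aux

open Stmt19Aux in
set_option maxHeartbeats 1000000 in
/-- for `R = ℂ[y₁,y₂,y₃]/(y₁²+y₂²+y₃², y₁y₂y₃, y₁³, y₂³, y₃³)` we have
`dim_ℂ R = 12`, and the successive quotients of the filtration `F_r = (y₃^r)R` for
`r = 0, 1, 2` have dimensions `5`, `4`, `3` respectively. -/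
theorem stmt19 (I : Ideal (MvPolynomial (Fin 3) ℂ))
    (hI : I = Ideal.span {X 0 ^ 2 + X 1 ^ 2 + X 2 ^ 2, X 0 * X 1 * X 2,
        X 0 ^ 3, X 1 ^ 3, (X 2 : MvPolynomial (Fin 3) ℂ) ^ 3})
    (F : ℕ → Ideal (MvPolynomial (Fin 3) ℂ ⧸ I))
    (hF : F = fun r => Ideal.span {(Ideal.Quotient.mk I (X 2)) ^ r})
    (quotDim : ℕ → ℕ)
    (hquotDim : ∀ r : ℕ, quotDim r = Module.finrank ℂ
      (↥((F r).restrictScalars ℂ) ⧸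
        Submodule.comap ((F r).restrictScalars ℂ).subtype ((F (r + 1)).restrictScalars ℂ))) :
    Module.finrank ℂ (MvPolynomial (Fin 3) ℂ ⧸ I) = 12 ∧
      quotDim 0 = 5 ∧ quotDim 1 = 4 ∧ quotDim 2 = 3 := by
  have hGS : I = Ideal.span GS := hI
  have hInd := indep_VV hGS
  have hSp := span_VV hGS
  let B : Module.Basis (Fin 12) ℂ (K3 ⧸ I) := Module.Basis.mk hInd hSp.ge
  haveI hfin : FiniteDimensional ℂ (MvPolynomial (Fin 3) ℂ ⧸ I) :=
    Module.Finite.of_basis B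
  have h12 : Module.finrank ℂ (MvPolynomial (Fin 3) ℂ ⧸ I) = 12 := by
    rw [Module.finrank_eq_card_basis B, Fintype.card_fin]
  have hF0 : F 0 = ⊤ := by
    rw [hF]
    simp [Ideal.span_singleton_one]
  have hF1 : (F 1).restrictScalars ℂ = Submodule.span ℂ (Set.range (VV I ∘ emb7)) := by
    rw [hF]
    simpa [pow_one] using F1_eq hGS
  have hF2 : (F 2).restrictScalars ℂ = Submodule.span ℂ (Set.range (VV I ∘ emb3)) := by
    rw [hF]
    exact F2_eq hGS
  have hF3 : F 3 = ⊥ := by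
    rw [hF]
    exact F3_eq hGS
  have r0 : Module.finrank ℂ ((F 0).restrictScalars ℂ) = 12 := by
    rw [hF0, Submodule.restrictScalars_top, finrank_top]
    exact h12
  have r1 : Module.finrank ℂ ((F 1).restrictScalars ℂ) = 7 := by
    rw [hF1, finrank_span_eq_card (hInd.comp emb7 (by decide)), Fintype.card_fin]
  have r2 : Module.finrank ℂ ((F 2).restrictScalars ℂ) = 3 := by
    rw [hF2, finrank_span_eq_card (hInd.comp emb3 (by decide)), Fintype.card_fin]
  have r3 : Module.finrank ℂ ((F 3).restrictScalars ℂ) = 0 := by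
    rw [hF3, Submodule.restrictScalars_bot, finrank_bot]
  have le1 : F 1 ≤ F 0 := by rw [hF0]; exact le_top
  have le2 : F 2 ≤ F 1 := by
    rw [hF]
    refine Ideal.span_le.mpr ?_
    simp only [Set.singleton_subset_iff, SetLike.mem_coe]
    exact Ideal.mem_span_singleton'.mpr ⟨Ideal.Quotient.mk I (X 2), by ring⟩
  have le3 : F 3 ≤ F 2 := by rw [hF3]; exact bot_le
  have key : ∀ r : ℕ, F (r + 1) ≤ F r →
      quotDim r = Module.finrank ℂ ((F r).restrictScalars ℂ)
        - Module.finrank ℂ ((F (r + 1)).restrictScalars ℂ) := by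
    intro r hle
    rw [hquotDim r]
    have hle' : (F (r + 1)).restrictScalars ℂ ≤ (F r).restrictScalars ℂ := fun x hx => hle hx
    have e1 : Module.finrank ℂ
        (Submodule.comap ((F r).restrictScalars ℂ).subtype ((F (r + 1)).restrictScalars ℂ))
        = Module.finrank ℂ ((F (r + 1)).restrictScalars ℂ) :=
      (Submodule.comapSubtypeEquivOfLe hle').finrank_eq
    have e2 := Submodule.finrank_quotient_add_finrank
      (Submodule.comap ((F r).restrictScalars ℂ).subtype ((F (r + 1)).restrictScalars ℂ))
    omega
  refine ⟨h12, ?_, ?_, ?_⟩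
  · rw [key 0 le1, r0, r1]
  · rw [key 1 le2, r1, r2]
  · rw [key 2 le3, r2, r3]
end
end
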